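/- arXiv:0806.2287 — 8 statements merged into one kernel-verified Lean document; each statement's English description precedes it below -/
import Mathlib

section
/- Let V_1, …, V_ℓ be an ordered bipartite decomposition of a finite simple graph H. Then for every i, the set U_i is an independent set in H; consequently, each H_i is a bipartite graph with parts U_i and V_i. -/
open SimpleGraph

/-- An ordered bipartite decomposition of a simple graph `H`: a sequence `P 0, …, P (ℓ-1)` of
vertex sets that (1) partitions the vertex set, (2) consists of independent sets, and
(3) for every `i` and `v ∈ P i` there is `j` such that every neighbour of `v` lies in
`P 0 ∪ ⋯ ∪ P (i-1) ∪ P j`. -/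
def IsOBD {V : Type*} (H : SimpleGraph V) {ℓ : ℕ} (P : Fin ℓ → Set V) : Prop :=
  (∀ v : V, ∃! i : Fin ℓ, v ∈ P i) ∧
  (∀ i : Fin ℓ, ∀ u ∈ P i, ∀ v ∈ P i, ¬ H.Adj u v) ∧
  (∀ i : Fin ℓ, ∀ v ∈ P i, ∃ j : Fin ℓ,
    ∀ u : V, H.Adj v u → (∃ k : Fin ℓ, k < i ∧ u ∈ P k) ∨ u ∈ P j)

/-- `obdU H P i` is the set `U_i`: vertices in `P 0 ∪ ⋯ ∪ P (i-1)` having a neighbour in `P i`. -/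
def obdU {V : Type*} (H : SimpleGraph V) {ℓ : ℕ} (P : Fin ℓ → Set V) (i : Fin ℓ) : Set V :=
  {u | (∃ v ∈ P i, H.Adj u v) ∧ ∃ k : Fin ℓ, k < i ∧ u ∈ P k}

/-- The edge set of `H_i`, the subgraph of `H` induced by `U_i ∪ V_i`. -/
def obdEdges {V : Type*} (H : SimpleGraph V) {ℓ : ℕ} (P : Fin ℓ → Set V) (i : Fin ℓ) :
    Set (Sym2 V) :=
  {e ∈ H.edgeSet | ∀ x ∈ e, x ∈ obdU H P i ∪ P i}

/-- In an ordered bipartite decomposition, every `U_i` is an independent set in `H`;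
consequently each `H_i` is bipartite with parts `U_i` and `V_i`: every edge of `H_i`
joins a vertex of `U_i` to a vertex of `V_i`. -/
theorem obd_U_independent_and_bipartite {V : Type*} (H : SimpleGraph V) {ℓ : ℕ}
    (P : Fin ℓ → Set V) (hP : IsOBD H P) :
    (∀ i : Fin ℓ, ∀ u ∈ obdU H P i, ∀ v ∈ obdU H P i, ¬ H.Adj u v) ∧
    (∀ i : Fin ℓ, ∀ e ∈ obdEdges H P i,
      ∃ u v : V, u ∈ obdU H P i ∧ v ∈ P i ∧ e = s(u, v)) := by

  obtain ⟨hpart, hindep, hdown⟩ := hP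
  have huniq : ∀ w : V, ∀ m n : Fin ℓ, w ∈ P m → w ∈ P n → m = n := by
    intro w m n hm hn
    obtain ⟨j, _, hj⟩ := hpart w
    rw [hj m hm, hj n hn]
  have aux : ∀ (i k k' : Fin ℓ) (u v w : V), k < i → k' < i → k < k' →
      u ∈ P k → v ∈ P k' → H.Adj u v → w ∈ P i → H.Adj u w → False := by
    intro i k k' u v w hki hk'i hkk' huk hvk' hadj hw huw
    obtain ⟨j, hj⟩ := hdown k u huk
    have hji : j = i := by
      rcases hj w huw with ⟨m, hm, hwm⟩ | h'
      · rw [huniq w m i hwm hw] at hm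
        exact absurd hm (not_lt.2 hki.le)
      · exact huniq w j i h' hw
    rcases hj v hadj with ⟨m, hm, hvm⟩ | h'
    · rw [huniq v m k' hvm hvk'] at hm
      exact absurd hkk' (not_lt.2 hm.le)
    · rw [hji] at h'
      exact absurd hk'i (not_lt.2 (huniq v k' i hvk' h').ge)
  have key : ∀ i : Fin ℓ, ∀ u ∈ obdU H P i, ∀ v ∈ obdU H P i, ¬ H.Adj u v := by
    intro i u hu v hv hadj
    obtain ⟨⟨w, hwP, huw⟩, k, hki, huk⟩ := hu
    obtain ⟨⟨w', hw'P, hvw'⟩, k', hk'i, hvk'⟩ := hv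
    rcases lt_trichotomy k k' with h | h | h
    · exact aux i k k' u v w hki hk'i h huk hvk' hadj hwP huw
    · exact hindep k u huk v (h ▸ hvk') hadj
    · exact aux i k' k v u w' hk'i hki h hvk' huk hadj.symm hw'P hvw'
  refine ⟨key, ?_⟩
  intro i e he
  induction e using Sym2.ind with
  | _ u v =>
    obtain ⟨hadj, hmem⟩ := he
    rw [SimpleGraph.mem_edgeSet] at hadj
    have hu := hmem u (by simp)
    have hv := hmem v (by simp)
    rcases hu with hu | hu <;> rcases hv with hv | hv
    · exact absurd hadj (key i u hu v hv)
    · exact ⟨u, v, hu, hv, rfl⟩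
    · exact ⟨v, u, hv, hu, Sym2.eq_swap⟩
    · exact absurd hadj (hindep i u hu v hv)
end

section
/- Let H be a finite simple graph with maximum degree Δ(H). Then every ordered bipartite decomposition of H has width at least Δ(H)/2. -/
open SimpleGraph

/-- Every ordered bipartite decomposition of a finite simple graph `H` has width at least
`Δ(H) / 2`, i.e. `Δ(H) ≤ 2 · width`. -/
theorem obd_width_ge_half_maxDegree {V : Type*} [Fintype V] (H : SimpleGraph V)
    [DecidableRel H.Adj] {ℓ : ℕ} (P : Fin ℓ → Set V) (hP : IsOBD H P) :
    H.maxDegree ≤ 2 * ⨆ i : Fin ℓ, (obdEdges H P i).ncard := by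
  classical
  obtain ⟨hpart, hind, hfwd⟩ := hP
  apply SimpleGraph.maxDegree_le_of_forall_degree_le
  intro v
  obtain ⟨i, hvi, _⟩ := hpart v
  obtain ⟨j, hj⟩ := hfwd i v hvi
  -- every neighbour u of v gives an edge in obdEdges i or obdEdges j
  have key : ∀ u ∈ H.neighborSet v,
      s(v, u) ∈ obdEdges H P i ∪ obdEdges H P j := by
    intro u hu
    have hadj : H.Adj v u := hu
    have hmem : ∀ x ∈ s(v, u), x = v ∨ x = u := by
      intro x hx; exact Sym2.mem_iff.mp hx
    rcases hj u hadj with ⟨k, hki, huk⟩ | huj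
    · left
      refine ⟨(H.mem_edgeSet).mpr hadj, ?_⟩
      intro x hx
      rcases hmem x hx with rfl | rfl
      · exact Or.inr hvi
      · exact Or.inl ⟨⟨v, hvi, hadj.symm⟩, k, hki, huk⟩
    · -- u ∈ P j; compare i and j
      have hij : i ≠ j := by
        rintro rfl
        exact hind i v hvi u huj hadj
      rcases lt_or_gt_of_ne hij with hlt | hgt
      · right
        refine ⟨(H.mem_edgeSet).mpr hadj, ?_⟩
        intro x hx
        rcases hmem x hx with rfl | rfl
        · exact Or.inl ⟨⟨u, huj, hadj⟩, i, hlt, hvi⟩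
        · exact Or.inr huj
      · left
        refine ⟨(H.mem_edgeSet).mpr hadj, ?_⟩
        intro x hx
        rcases hmem x hx with rfl | rfl
        · exact Or.inr hvi
        · exact Or.inl ⟨⟨v, hvi, hadj.symm⟩, j, hgt, huj⟩
  have hinj : Set.InjOn (fun u => s(v, u)) (H.neighborSet v) := by
    intro a _ b _ hab
    rcases Sym2.eq_iff.mp hab with ⟨_, h⟩ | ⟨h1, h2⟩
    · exact h
    · exact h2.trans h1
  have hfin : (obdEdges H P i ∪ obdEdges H P j).Finite :=
    Set.toFinite _
  have h1 : (H.neighborSet v).ncard ≤ (obdEdges H P i ∪ obdEdges H P j).ncard :=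
    Set.ncard_le_ncard_of_injOn _ key hinj hfin
  have h2 : (obdEdges H P i ∪ obdEdges H P j).ncard ≤
      (obdEdges H P i).ncard + (obdEdges H P j).ncard :=
    Set.ncard_union_le _ _
  have hbdd : BddAbove (Set.range fun i : Fin ℓ => (obdEdges H P i).ncard) :=
    Set.Finite.bddAbove (Set.finite_range _)
  have h3 : (obdEdges H P i).ncard ≤ ⨆ i : Fin ℓ, (obdEdges H P i).ncard :=
    le_ciSup hbdd i
  have h4 : (obdEdges H P j).ncard ≤ ⨆ i : Fin ℓ, (obdEdges H P i).ncard :=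
    le_ciSup hbdd j
  have hdeg : H.degree v = (H.neighborSet v).ncard := by
    rw [← SimpleGraph.card_neighborSet_eq_degree, Set.ncard_eq_toFinset_card']
    simp
  omega
end

section
/- For every integer k ≥ 4, the cycle graph on k vertices s_1, …, s_k (enumerated in cyclic order) has an ordered bipartite decomposition of width at most 2; indeed, V_1 = {s_1}, V_2 = {s_2, s_k}, and V_i = {s_i} for 3 ≤ i ≤ k−1 is such a decomposition. -/
open SimpleGraph

private lemma mod_helper' {k a b : ℕ} (hk : 2 ≤ k) (ha : a < k) (hb : b < k) :
    ((k - b) + a) % k = 1 ↔ (a = b + 1 ∨ (a = 0 ∧ b + 1 = k)) := by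
  rcases Nat.lt_or_ge ((k - b) + a) k with h | h
  · rw [Nat.mod_eq_of_lt h]; omega
  · rw [Nat.mod_eq_sub_mod h, Nat.mod_eq_of_lt (by omega)]; omega

private lemma cycle_adj' {k : ℕ} (hk : 2 ≤ k) (u v : Fin k) :
    (SimpleGraph.cycleGraph k).Adj u v ↔
      ((u : ℕ) = (v : ℕ) + 1 ∨ (v : ℕ) = (u : ℕ) + 1 ∨
       ((u : ℕ) = 0 ∧ (v : ℕ) + 1 = k) ∨ ((v : ℕ) = 0 ∧ (u : ℕ) + 1 = k)) := by
  rw [SimpleGraph.cycleGraph_adj', Fin.sub_def, Fin.sub_def,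
    mod_helper' hk u.isLt v.isLt, mod_helper' hk v.isLt u.isLt]
  omega

set_option maxHeartbeats 1000000 in
/-- For every `k ≥ 4`, the cycle graph on `k` vertices `s₁, …, s_k` (in cyclic order) has an
ordered bipartite decomposition of width at most 2; indeed `V₁ = {s₁}`, `V₂ = {s₂, s_k}`
and `V_i = {s_i}` for `3 ≤ i ≤ k-1` is such a decomposition.  (Vertices are indexed from 0:
`s_{i+1}` is vertex `i : Fin k`, and part `V_{i+1}` is `P i` for `i : Fin (k-1)`.) -/
theorem cycle_obd (k : ℕ) (hk : 4 ≤ k)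
    (P : Fin (k - 1) → Set (Fin k))
    (hP : ∀ i : Fin (k - 1), P i =
      if (i : ℕ) = 1 then
        ({⟨1, by omega⟩, ⟨k - 1, by omega⟩} : Set (Fin k))
      else
        ({⟨(i : ℕ), lt_of_lt_of_le i.isLt (Nat.sub_le k 1)⟩} : Set (Fin k))) :
    IsOBD (SimpleGraph.cycleGraph k) P ∧
    ∀ i : Fin (k - 1), (obdEdges (SimpleGraph.cycleGraph k) P i).ncard ≤ 2 := by
  have hk2 : 2 ≤ k := by omega
  have memP : ∀ (i : Fin (k-1)) (v : Fin k), v ∈ P i ↔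
      (((i:ℕ) = 1 ∧ ((v:ℕ) = 1 ∨ (v:ℕ) + 1 = k)) ∨ ((i:ℕ) ≠ 1 ∧ (v:ℕ) = (i:ℕ))) := by
    intro i v
    rw [hP i]
    split_ifs with h1
    · simp only [Set.mem_insert_iff, Set.mem_singleton_iff, Fin.ext_iff]
      omega
    · simp only [Set.mem_singleton_iff, Fin.ext_iff]
      omega
  constructor
  · refine ⟨?_, ?_, ?_⟩
    · -- partition
      intro v
      by_cases hv : (v : ℕ) = k - 1
      · refine ⟨⟨1, by omega⟩, ?_, ?_⟩
        · refine (memP _ _).mpr ?_; simp only [Fin.val_mk, true_and, and_true, false_and, and_false, ne_eq, or_false, false_or, true_or, or_true] <;> omega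
        · intro j hj
          rw [memP] at hj
          simp only [Fin.ext_iff, Fin.val_mk]
          have := j.isLt
          omega
      · refine ⟨⟨(v : ℕ), by omega⟩, ?_, ?_⟩
        · refine (memP _ _).mpr ?_
          simp only [Fin.val_mk, true_and, and_true, false_and, and_false, ne_eq, or_false, false_or, true_or, or_true] <;> omega
        · intro j hj
          rw [memP] at hj
          simp only [Fin.ext_iff, Fin.val_mk]
          have := j.isLt
          omega
    · -- independent
      intro i u hu v hv hadj
      rw [memP] at hu hv
      rw [cycle_adj' hk2] at hadj
      have := u.isLt
      have := v.isLt
      omega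
    · -- forward condition
      intro i v hv
      rw [memP] at hv
      have hi := i.isLt
      by_cases h0 : (i : ℕ) = 0
      · refine ⟨⟨1, by omega⟩, ?_⟩
        intro u hadj
        rw [cycle_adj' hk2] at hadj
        right
        rw [memP]
        have := u.isLt
        simp only [Fin.val_mk, true_and, and_true, false_and, and_false, ne_eq, or_false, false_or, true_or, or_true] <;> omega
      · by_cases h1 : (i : ℕ) = 1
        · rcases hv with ⟨-, hv | hv⟩ | ⟨hne, -⟩
          · -- v = 1
            refine ⟨⟨2, by omega⟩, ?_⟩
            intro u hadj
            rw [cycle_adj' hk2] at hadj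
            have hu := u.isLt
            by_cases hu0 : (u : ℕ) = 0
            · exact Or.inl ⟨⟨0, by omega⟩, by simp only [Fin.lt_def, Fin.val_mk]; omega,
                by rw [memP]; simp only [Fin.val_mk, true_and, and_true, false_and, and_false, ne_eq, or_false, false_or, true_or, or_true] <;> omega⟩
            · right; rw [memP]; simp only [Fin.val_mk, true_and, and_true, false_and, and_false, ne_eq, or_false, false_or, true_or, or_true] <;> omega
          · -- v = k - 1
            refine ⟨⟨k - 2, by omega⟩, ?_⟩
            intro u hadj
            rw [cycle_adj' hk2] at hadj
            have hu := u.isLt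
            by_cases hu0 : (u : ℕ) = 0
            · exact Or.inl ⟨⟨0, by omega⟩, by simp only [Fin.lt_def, Fin.val_mk]; omega,
                by rw [memP]; simp only [Fin.val_mk, true_and, and_true, false_and, and_false, ne_eq, or_false, false_or, true_or, or_true] <;> omega⟩
            · right; rw [memP]; simp only [Fin.val_mk, true_and, and_true, false_and, and_false, ne_eq, or_false, false_or, true_or, or_true] <;> omega
          · exact absurd h1 hne
        · -- i ≥ 2, v = i
          have hv' : (v : ℕ) = (i : ℕ) := by omega
          by_cases hlast : (i : ℕ) + 2 = k
          · refine ⟨⟨1, by omega⟩, ?_⟩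
            intro u hadj
            rw [cycle_adj' hk2] at hadj
            have hu := u.isLt
            by_cases hcase : (u : ℕ) + 1 = k
            · exact Or.inl ⟨⟨1, by omega⟩, by simp only [Fin.lt_def, Fin.val_mk]; omega,
                by rw [memP]; simp only [Fin.val_mk, true_and, and_true, false_and, and_false, ne_eq, or_false, false_or, true_or, or_true] <;> omega⟩
            · exact Or.inl ⟨⟨(i:ℕ) - 1, by omega⟩, by simp only [Fin.lt_def, Fin.val_mk]; omega,
                by rw [memP]; simp only [Fin.val_mk, true_and, and_true, false_and, and_false, ne_eq, or_false, false_or, true_or, or_true] <;> omega⟩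
          · refine ⟨⟨(i : ℕ) + 1, by omega⟩, ?_⟩
            intro u hadj
            rw [cycle_adj' hk2] at hadj
            have hu := u.isLt
            by_cases hcase : (u : ℕ) = (i : ℕ) + 1
            · right; rw [memP]; simp only [Fin.val_mk, true_and, and_true, false_and, and_false, ne_eq, or_false, false_or, true_or, or_true] <;> omega
            · exact Or.inl ⟨⟨(i:ℕ) - 1, by omega⟩, by simp only [Fin.lt_def, Fin.val_mk]; omega,
                by rw [memP]; simp only [Fin.val_mk, true_and, and_true, false_and, and_false, ne_eq, or_false, false_or, true_or, or_true] <;> omega⟩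
  · -- width
    intro i
    have hi := i.isLt
    -- choose two candidate edges
    set e1 : Sym2 (Fin k) := s(⟨(i:ℕ) - 1, by omega⟩, ⟨(i:ℕ), by omega⟩) with he1
    set e2 : Sym2 (Fin k) := if (i : ℕ) = 1 then s(⟨0, by omega⟩, ⟨k - 1, by omega⟩)
      else s(⟨(i:ℕ), by omega⟩, ⟨k - 1, by omega⟩) with he2
    have hsub : obdEdges (SimpleGraph.cycleGraph k) P i ⊆ {e1, e2} := by
      intro e he
      induction e using Sym2.ind with
      | _ a b =>
        obtain ⟨hadj, hmem⟩ := he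
        rw [SimpleGraph.mem_edgeSet, cycle_adj' hk2] at hadj
        have ha := hmem a (Sym2.mem_mk_left a b)
        have hb := hmem b (Sym2.mem_mk_right a b)
        have hak := a.isLt
        have hbk := b.isLt
        -- reduce memberships to arithmetic facts
        have reduce : ∀ x : Fin k, x ∈ obdU (SimpleGraph.cycleGraph k) P i ∪ P i →
            ((x : ℕ) + 1 = (i : ℕ) ∨ ((i : ℕ) = 1 ∧ (x : ℕ) = 0) ∨
             ((i : ℕ) + 2 = k ∧ (x : ℕ) + 1 = k) ∨
             ((i : ℕ) = 1 ∧ ((x : ℕ) = 1 ∨ (x : ℕ) + 1 = k)) ∨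
             ((i : ℕ) ≠ 1 ∧ (x : ℕ) = (i : ℕ))) := by
          intro x hx
          have hxk := x.isLt
          rcases hx with hx | hx
          · obtain ⟨⟨w, hw1, hw2⟩, ⟨j, hj1, hj2⟩⟩ := hx
            rw [memP] at hw1 hj2
            rw [cycle_adj' hk2] at hw2
            rw [Fin.lt_def] at hj1
            have hwk := w.isLt
            have hjk := j.isLt
            omega
          · rw [memP] at hx
            omega
        have ha' := reduce a ha
        have hb' := reduce b hb
        simp only [Set.mem_insert_iff, Set.mem_singleton_iff, he1, he2]
        split_ifs with h1
        · simp only [Sym2.eq_iff, Fin.ext_iff]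
          omega
        · simp only [Sym2.eq_iff, Fin.ext_iff]
          omega
    calc (obdEdges (SimpleGraph.cycleGraph k) P i).ncard
        ≤ ({e1, e2} : Set (Sym2 (Fin k))).ncard :=
          Set.ncard_le_ncard hsub (Set.toFinite _)
      _ ≤ 2 := by
          refine (Set.ncard_insert_le _ _).trans ?_
          simp
end

section
/- Every finite tree T (a connected acyclic simple graph) has an ordered bipartite decomposition of width at most Δ(T), where Δ(T) is the maximum degree of T. -/
open SimpleGraph

private lemma support_dist_le' {V : Type*} [DecidableEq V] (T : SimpleGraph V) {r u : V}
    (p : T.Walk r u) (hp : p.length = T.dist r u) {x : V} (hx : x ∈ p.support) :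
    T.dist r x + T.dist x u ≤ T.dist r u := by
  have h1 : T.dist r x ≤ (p.takeUntil x hx).length := dist_le _
  have h2 : T.dist x u ≤ (p.dropUntil x hx).length := dist_le _
  have h3 := congrArg Walk.length (p.take_spec hx)
  rw [Walk.length_append] at h3
  omega

private lemma tree_adj_dist_ne' {V : Type*} {T : SimpleGraph V} (hT : T.IsTree) (r : V)
    {u v : V} (h : T.Adj u v) : T.dist r u ≠ T.dist r v := by
  classical
  intro heq
  have hc := hT.isConnected
  obtain ⟨q, hq, hlen⟩ := hc.exists_path_of_dist r u
  by_cases hv : v ∈ q.support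
  · have := support_dist_le' T q hlen hv
    rw [heq] at this
    have h0 : T.dist v u = 0 := by omega
    exact h.ne' ((h.symm.reachable.dist_eq_zero_iff).1 h0)
  · have hcpath : (q.concat h).IsPath := by
      refine (Walk.isPath_reverse_iff _).1 ?_
      rw [Walk.reverse_concat, Walk.cons_isPath_iff]
      refine ⟨(Walk.isPath_reverse_iff _).2 hq, ?_⟩
      simpa [Walk.support_reverse] using hv
    obtain ⟨qv, hqv, hlenv⟩ := hc.exists_path_of_dist r v
    have := (hT.existsUnique_path r v).unique hcpath hqv
    have hl := congrArg Walk.length this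
    rw [Walk.length_concat, hlen, hlenv, heq] at hl
    omega

private lemma tree_parent' {V : Type*} {T : SimpleGraph V} (hT : T.IsTree) (r : V) {v : V}
    (hv : v ≠ r) : ∃! p : V, T.Adj v p ∧ T.dist r p + 1 = T.dist r v := by
  classical
  have hc := hT.isConnected
  have hd : 0 < T.dist r v := hc.pos_dist_of_ne (Ne.symm hv)
  obtain ⟨q, hq, hlen⟩ := hc.exists_path_of_dist r v
  have hnil : ¬ q.reverse.Nil := by
    rw [Walk.not_nil_iff_lt_length, Walk.length_reverse]
    omega
  obtain ⟨x, hvx, q', hq'⟩ := Walk.not_nil_iff.1 hnil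
  have hql : q'.length + 1 = T.dist r v := by
    have := congrArg Walk.length hq'
    rw [Walk.length_reverse, Walk.length_cons] at this
    omega
  have hcomm : T.dist r x = T.dist x r := T.dist_comm
  have hxle : T.dist r x + 1 ≤ T.dist r v := by
    have := dist_le q'
    omega
  have hxge : T.dist r v ≤ T.dist r x + 1 := by
    have ht := hc.dist_triangle (u := r) (v := x) (w := v)
    have h1 : T.dist x v = 1 := by
      rw [dist_eq_one_iff_adj]; exact hvx.symm
    omega
  have hx : T.dist r x + 1 = T.dist r v := by omega
  have key : ∀ w : V, ∀ hw : T.Adj v w, T.dist r w + 1 = T.dist r v →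
      ∃ qq : T.Walk r w, (qq.concat hw.symm).IsPath := by
    intro w hw hwd
    obtain ⟨qq, hqq, hqql⟩ := hc.exists_path_of_dist r w
    have hvnot : v ∉ qq.support := by
      intro hvs
      have := support_dist_le' T qq hqql hvs
      have : T.dist r v ≤ T.dist r w := by omega
      omega
    refine ⟨qq, (Walk.isPath_reverse_iff _).1 ?_⟩
    rw [Walk.reverse_concat, Walk.cons_isPath_iff]
    refine ⟨(Walk.isPath_reverse_iff _).2 hqq, ?_⟩
    simpa [Walk.support_reverse] using hvnot
  refine ⟨x, ⟨hvx, hx⟩, ?_⟩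
  rintro p ⟨hp, hpd⟩
  obtain ⟨q1, h1⟩ := key p hp hpd
  obtain ⟨q2, h2⟩ := key x hvx hx
  have heq := (hT.existsUnique_path r v).unique h1 h2
  obtain ⟨hpx, -⟩ := Walk.concat_inj heq
  exact hpx


/-- Every finite tree `T` (a connected acyclic simple graph) has an ordered bipartite
decomposition of width at most `Δ(T)`, the maximum degree of `T`. -/
theorem tree_obd {V : Type*} [Fintype V] (T : SimpleGraph V) [DecidableRel T.Adj]
    (hT : T.IsTree) :
    ∃ (ℓ : ℕ) (P : Fin ℓ → Set V),
      IsOBD T P ∧ ∀ i, (obdEdges T P i).ncard ≤ T.maxDegree := by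
  classical
  have hc := hT.isConnected
  have hac := hT.IsAcyclic
  haveI : Nonempty V := hc.nonempty
  set r : V := Classical.arbitrary V with hr
  let e0 : V ≃ Fin (Fintype.card V) := Fintype.equivFin V
  have hkey : Function.Injective
      (fun v : V => toLex (OrderDual.toDual (T.dist r v), e0 v)) := by
    intro a b hab
    have h2 := congrArg (fun x => (ofLex x).2) hab
    exact e0.injective h2
  letI : LinearOrder V :=
    LinearOrder.lift' (fun v : V => toLex (OrderDual.toDual (T.dist r v), e0 v)) hkey
  let e : Fin (Fintype.card V) ≃o V := monoEquivOfFin V rfl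
  have hlt : ∀ u w : V, T.dist r w < T.dist r u → u < w := by
    intro u w h
    show toLex (OrderDual.toDual (T.dist r u), e0 u) < toLex (OrderDual.toDual (T.dist r w), e0 w)
    exact Prod.Lex.left _ _ (OrderDual.toDual_lt_toDual.2 h)
  have hidx : ∀ u w : V, u < w → e.symm u < e.symm w := by
    intro u w h
    exact (OrderIso.lt_iff_lt e.symm).2 h
  refine ⟨Fintype.card V, fun i => {e i}, ⟨?_, ?_, ?_⟩, ?_⟩
  · -- partition
    intro v
    refine ⟨e.symm v, by simp, ?_⟩
    intro j hj
    rw [Set.mem_singleton_iff] at hj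
    rw [hj]; simp
  · -- independence
    intro i u hu v hv
    rw [Set.mem_singleton_iff] at hu hv
    rw [hu, hv]
    exact T.loopless.irrefl (e i)
  · -- condition (3)
    intro i v hv
    rw [Set.mem_singleton_iff] at hv
    have hi : e.symm v = i := by rw [hv]; simp
    by_cases hvr : v = r
    · refine ⟨i, ?_⟩
      intro u hadj
      left
      have hne : u ≠ r := by
        intro h; rw [h, ← hvr] at hadj; exact T.loopless.irrefl v hadj
      have hdv : T.dist r v = 0 := by rw [hvr]; exact T.dist_self
      have hdu : 0 < T.dist r u := hc.pos_dist_of_ne (Ne.symm hne)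
      refine ⟨e.symm u, ?_, by simp⟩
      rw [← hi]
      exact hidx u v (hlt u v (by omega))
    · obtain ⟨p, ⟨hvp, hdp⟩, hpu⟩ := tree_parent' hT r hvr
      refine ⟨e.symm p, ?_⟩
      intro u hadj
      rcases lt_trichotomy (T.dist r u) (T.dist r v) with hlt1 | heq1 | hgt1
      · -- u is the parent
        right
        have htri : T.dist r v ≤ T.dist r u + T.dist u v :=
          hc.dist_triangle
        have hone : T.dist u v = 1 := by
          rw [dist_eq_one_iff_adj]; exact hadj.symm
        have : T.dist r u + 1 = T.dist r v := by omega
        have := hpu u ⟨hadj, this⟩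
        rw [this]; simp
      · exact absurd heq1 (tree_adj_dist_ne' hT r hadj.symm)
      · left
        refine ⟨e.symm u, ?_, by simp⟩
        rw [← hi]
        exact hidx u v (hlt u v hgt1)
  · -- edge bound
    intro i
    set v := e i with hvdef
    have hsub : obdEdges T (fun i => {e i}) i ⊆ (fun u => s(v, u)) '' (T.neighborSet v) := by
      intro w
      induction w using Sym2.ind with
      | _ a b =>
        rintro ⟨hab, hmem⟩
        rw [SimpleGraph.mem_edgeSet] at hab
        have ha := hmem a (Sym2.mem_mk_left a b)
        have hb := hmem b (Sym2.mem_mk_right a b)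
        have hUadj : ∀ x : V, x ∈ obdU T (fun i => {e i}) i → T.Adj x v := by
          rintro x ⟨⟨y, hy, hxy⟩, -⟩
          rw [Set.mem_singleton_iff] at hy
          rwa [hy] at hxy
        rcases ha with ha | ha
        · rcases hb with hb | hb
          · -- both in U : triangle
            exfalso
            have hav : T.Adj a v := hUadj a ha
            have hbv : T.Adj b v := hUadj b hb
            let c : T.Walk v v := .cons hav.symm (.cons hab (.cons hbv .nil))
            have hcyc : c.IsCycle := by
              rw [Walk.cons_isCycle_iff]
              constructor
              · rw [Walk.cons_isPath_iff]
                refine ⟨?_, ?_⟩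
                · rw [Walk.cons_isPath_iff]
                  refine ⟨Walk.IsPath.nil, by simp [hbv.ne]⟩
                · simp [hab.ne, hav.ne]
              · simp only [Walk.edges_cons, Walk.edges_nil, List.mem_cons, List.not_mem_nil,
                  or_false]
                push_neg
                constructor
                · intro h
                  rw [Sym2.eq_iff] at h
                  rcases h with ⟨h1, h2⟩ | ⟨h1, h2⟩
                  · exact hav.ne' h1
                  · exact hbv.ne' h1
                · intro h
                  rw [Sym2.eq_iff] at h
                  rcases h with ⟨h1, h2⟩ | ⟨h1, h2⟩
                  · exact hbv.ne' h1
                  · exact hab.ne h2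
            exact hac c hcyc
          · -- b = v
            rw [Set.mem_singleton_iff] at hb
            subst hb
            exact ⟨a, hab.symm, Sym2.eq_swap⟩
        · -- a = v
          rw [Set.mem_singleton_iff] at ha
          subst ha
          exact ⟨b, hab, rfl⟩
    have hfin : ((fun u => s(v, u)) '' (T.neighborSet v)).Finite :=
      ((T.neighborSet v).toFinite).image _
    calc (obdEdges T (fun i => {e i}) i).ncard
        ≤ ((fun u => s(v, u)) '' (T.neighborSet v)).ncard := Set.ncard_le_ncard hsub hfin
      _ ≤ (T.neighborSet v).ncard := Set.ncard_image_le (T.neighborSet v).toFinite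
      _ = T.degree v := by
          rw [Set.ncard_eq_toFinset_card', Set.toFinset_card]
          exact T.card_neighborSet_eq_degree v
      _ ≤ T.maxDegree := T.degree_le_maxDegree v
end

section
/- For all positive integers a and b, the a×b grid graph has an ordered bipartite decomposition of width at most 2·min(a,b); indeed, taking V_i to be the set of vertices at Manhattan (lattice) distance i−1 from the corner vertex (0,0) gives such a decomposition. -/
open SimpleGraph

/-- The `a × b` grid graph: vertices `(i, j)` with `0 ≤ i ≤ a-1`, `0 ≤ j ≤ b-1`, adjacent
exactly when they agree in one coordinate and differ by exactly 1 in the other. -/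
def gridGraph (a b : ℕ) : SimpleGraph (Fin a × Fin b) where
  Adj u v :=
    (u.1 = v.1 ∧ ((u.2 : ℕ) + 1 = (v.2 : ℕ) ∨ (v.2 : ℕ) + 1 = (u.2 : ℕ))) ∨
    (u.2 = v.2 ∧ ((u.1 : ℕ) + 1 = (v.1 : ℕ) ∨ (v.1 : ℕ) + 1 = (u.1 : ℕ)))
  symm := by
    constructor
    intro u v h
    rcases h with ⟨h1, h2⟩ | ⟨h1, h2⟩
    · exact Or.inl ⟨h1.symm, h2.symm⟩
    · exact Or.inr ⟨h1.symm, h2.symm⟩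
  loopless := by
    constructor
    intro u h
    rcases h with ⟨_, h⟩ | ⟨_, h⟩ <;> omega


section GridAux

variable {a b : ℕ}

lemma grid_adj_sum {u v : Fin a × Fin b} (h : (gridGraph a b).Adj u v) :
    (u.1 : ℕ) + u.2 + 1 = (v.1 : ℕ) + v.2 ∨ (v.1 : ℕ) + v.2 + 1 = (u.1 : ℕ) + u.2 := by
  rcases h with ⟨h1, h2⟩ | ⟨h1, h2⟩ <;>
    · have := congrArg Fin.val h1; omega

lemma diag_ncard_le (i : ℕ) :
    {v : Fin a × Fin b | (v.1 : ℕ) + (v.2 : ℕ) = i}.ncard ≤ min a b := by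
  set D : Set (Fin a × Fin b) := {v | (v.1 : ℕ) + (v.2 : ℕ) = i} with hD
  have hfst : Set.InjOn Prod.fst D := by
    intro x hx y hy h
    simp only [hD, Set.mem_setOf_eq] at hx hy
    have h1 := congrArg Fin.val h
    exact Prod.ext h (Fin.ext (by omega))
  have hsnd : Set.InjOn Prod.snd D := by
    intro x hx y hy h
    simp only [hD, Set.mem_setOf_eq] at hx hy
    have h1 := congrArg Fin.val h
    exact Prod.ext (Fin.ext (by omega)) h
  have ha' : D.ncard ≤ a := by
    rw [← Set.ncard_image_of_injOn hfst]
    calc (Prod.fst '' D).ncard ≤ (Set.univ : Set (Fin a)).ncard :=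
          Set.ncard_le_ncard (Set.subset_univ _) Set.finite_univ
      _ = a := by simp [Set.ncard_univ]
  have hb' : D.ncard ≤ b := by
    rw [← Set.ncard_image_of_injOn hsnd]
    calc (Prod.snd '' D).ncard ≤ (Set.univ : Set (Fin b)).ncard :=
          Set.ncard_le_ncard (Set.subset_univ _) Set.finite_univ
      _ = b := by simp [Set.ncard_univ]
  omega

end GridAux

/-- For all positive `a` and `b`, the `a × b` grid graph has an ordered bipartite
decomposition of width at most `2 · min a b`; indeed, taking the `i`-th part to consist of
the vertices at Manhattan distance `i - 1` from the corner `(0, 0)` (here: `P i` is the set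
of vertices at distance `i` for `i : Fin (a + b - 1)`) gives such a decomposition. -/
theorem grid_obd (a b : ℕ) (ha : 0 < a) (hb : 0 < b) :
    IsOBD (gridGraph a b)
      (fun i : Fin (a + b - 1) => {v : Fin a × Fin b | (v.1 : ℕ) + (v.2 : ℕ) = (i : ℕ)}) ∧
    ∀ i : Fin (a + b - 1),
      (obdEdges (gridGraph a b)
        (fun i : Fin (a + b - 1) => {v : Fin a × Fin b | (v.1 : ℕ) + (v.2 : ℕ) = (i : ℕ)})
        i).ncard ≤ 2 * min a b := by
  
  have hsum_lt : ∀ v : Fin a × Fin b, (v.1 : ℕ) + (v.2 : ℕ) < a + b - 1 := by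
    intro v
    have h1 := v.1.isLt
    have h2 := v.2.isLt
    omega
  constructor
  · refine ⟨?_, ?_, ?_⟩
    · intro v
      refine ⟨⟨(v.1 : ℕ) + (v.2 : ℕ), hsum_lt v⟩, rfl, ?_⟩
      intro j hj
      exact Fin.ext hj.symm
    · intro i u hu v hv hadj
      simp only [Set.mem_setOf_eq] at hu hv
      rcases grid_adj_sum hadj with h | h <;> omega
    · intro i v hv
      simp only [Set.mem_setOf_eq] at hv
      by_cases h : (i : ℕ) + 1 < a + b - 1
      · refine ⟨⟨(i : ℕ) + 1, h⟩, ?_⟩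
        intro u hadj
        rcases grid_adj_sum hadj with hs | hs
        · right; simp only [Set.mem_setOf_eq]; omega
        · left
          refine ⟨⟨(u.1 : ℕ) + (u.2 : ℕ), hsum_lt u⟩, ?_, rfl⟩
          simp only [Fin.lt_def]; omega
      · refine ⟨i, ?_⟩
        intro u hadj
        have := hsum_lt u
        rcases grid_adj_sum hadj with hs | hs
        · omega
        · left
          refine ⟨⟨(u.1 : ℕ) + (u.2 : ℕ), hsum_lt u⟩, ?_, rfl⟩
          simp only [Fin.lt_def]; omega
  · intro i
    set P : Fin (a + b - 1) → Set (Fin a × Fin b) :=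
      fun i => {v : Fin a × Fin b | (v.1 : ℕ) + (v.2 : ℕ) = (i : ℕ)} with hP
    set D : Set (Fin a × Fin b) := {v | (v.1 : ℕ) + (v.2 : ℕ) = (i : ℕ)} with hD
    set g1 : Fin a × Fin b → Sym2 (Fin a × Fin b) :=
      fun v => s(v, (⟨(v.1 : ℕ) - 1, Nat.lt_of_le_of_lt (Nat.sub_le _ _) v.1.isLt⟩, v.2))
      with hg1
    set g2 : Fin a × Fin b → Sym2 (Fin a × Fin b) :=
      fun v => s(v, (v.1, ⟨(v.2 : ℕ) - 1, Nat.lt_of_le_of_lt (Nat.sub_le _ _) v.2.isLt⟩))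
      with hg2
    have hsub : obdEdges (gridGraph a b) P i ⊆ g1 '' D ∪ g2 '' D := by
      intro e
      induction e using Sym2.ind with
      | _ u v =>
        intro he
        obtain ⟨heE, hmem⟩ := he
        have hadj : (gridGraph a b).Adj u v := heE
        have hu := hmem u (Sym2.mem_mk_left u v)
        have hv := hmem v (Sym2.mem_mk_right u v)
        have hlt : ∀ x : Fin a × Fin b, x ∈ obdU (gridGraph a b) P i ∪ P i →
            (x.1 : ℕ) + (x.2 : ℕ) + 1 = (i : ℕ) ∨ (x.1 : ℕ) + (x.2 : ℕ) = (i : ℕ) := by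
          intro x hx
          rcases hx with ⟨⟨w, hw, hxw⟩, k, hk, hxk⟩ | hx
          · left
            simp only [hP, Set.mem_setOf_eq] at hxk hw
            simp only [Fin.lt_def] at hk
            rcases grid_adj_sum hxw with h | h <;> omega
          · right; exact hx
        have hu' := hlt u hu
        have hv' := hlt v hv
        rcases grid_adj_sum hadj with hs | hs
        · -- sum u + 1 = sum v, so sum v = i, v is the high vertex
          have hvD : v ∈ D := by
            simp only [hD, Set.mem_setOf_eq]
            rcases hu' with h | h <;> rcases hv' with h' | h' <;> omega
          rcases hadj with ⟨h1, h2⟩ | ⟨h1, h2⟩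
          · -- u.1 = v.1, vertical edge: u.2 + 1 = v.2
            right
            refine ⟨v, hvD, ?_⟩
            have h1' := congrArg Fin.val h1
            have hueq : u = (v.1, ⟨(v.2 : ℕ) - 1,
                Nat.lt_of_le_of_lt (Nat.sub_le _ _) v.2.isLt⟩) := by
              refine Prod.ext h1 (Fin.ext ?_)
              simp only []
              rcases h2 with h2 | h2 <;> omega
            rw [hg2]
            simp only []
            rw [hueq, Sym2.eq_swap]
          · -- horizontal edge: u.1 + 1 = v.1
            left
            refine ⟨v, hvD, ?_⟩
            have h1' := congrArg Fin.val h1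
            have hueq : u = (⟨(v.1 : ℕ) - 1,
                Nat.lt_of_le_of_lt (Nat.sub_le _ _) v.1.isLt⟩, v.2) := by
              refine Prod.ext (Fin.ext ?_) h1
              simp only []
              rcases h2 with h2 | h2 <;> omega
            rw [hg1]
            simp only []
            rw [hueq, Sym2.eq_swap]
        · -- sum v + 1 = sum u, so u is the high vertex
          have huD : u ∈ D := by
            simp only [hD, Set.mem_setOf_eq]
            rcases hu' with h | h <;> rcases hv' with h' | h' <;> omega
          rcases hadj with ⟨h1, h2⟩ | ⟨h1, h2⟩
          · right
            refine ⟨u, huD, ?_⟩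
            have h1' := congrArg Fin.val h1
            have hveq : v = (u.1, ⟨(u.2 : ℕ) - 1,
                Nat.lt_of_le_of_lt (Nat.sub_le _ _) u.2.isLt⟩) := by
              refine Prod.ext h1.symm (Fin.ext ?_)
              simp only []
              rcases h2 with h2 | h2 <;> omega
            rw [hg2]
            simp only []
            rw [hveq]
          · left
            refine ⟨u, huD, ?_⟩
            have h1' := congrArg Fin.val h1
            have hveq : v = (⟨(u.1 : ℕ) - 1,
                Nat.lt_of_le_of_lt (Nat.sub_le _ _) u.1.isLt⟩, u.2) := by
              refine Prod.ext (Fin.ext ?_) h1.symm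
              simp only []
              rcases h2 with h2 | h2 <;> omega
            rw [hg1]
            simp only []
            rw [hveq]
    calc (obdEdges (gridGraph a b) P i).ncard ≤ (g1 '' D ∪ g2 '' D).ncard :=
          Set.ncard_le_ncard hsub (Set.toFinite _)
      _ ≤ (g1 '' D).ncard + (g2 '' D).ncard := Set.ncard_union_le _ _
      _ ≤ D.ncard + D.ncard :=
          Nat.add_le_add (Set.ncard_image_le (Set.toFinite _)) (Set.ncard_image_le (Set.toFinite _))
      _ ≤ 2 * min a b := by
          have h := diag_ncard_le (a := a) (b := b) ((i : ℕ))
          rw [← hD] at h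
          omega
end

section
/- Let F be a finite simple graph and let H be a proper subdivision of F, i.e., H is obtained from F by replacing every edge of F by a path with at least one internal vertex. Then H has an ordered bipartite decomposition of width at most 2·Δ(H), where Δ(H) is the maximum degree of H. -/
set_option linter.unusedSectionVars false
set_option linter.unusedVariables false
set_option maxHeartbeats 1000000


open SimpleGraph

/-- `H` is a proper subdivision of `F`: there is an injection `f` of the vertices of `F` into
those of `H` and, for each edge `u v` of `F`, a path in `H` from `f u` to `f v` of length at
least 2 (so with at least one internal vertex); opposite orientations give reversed paths;
the only branch vertices on the path of an edge are its endpoints; the paths of distinct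
edges meet only in branch vertices (internal disjointness); and every vertex and every edge
of `H` lies on one of these paths (or, for vertices, is a branch vertex). -/
def IsProperSubdivision {α β : Type*} (F : SimpleGraph α) (H : SimpleGraph β) : Prop :=
  ∃ (f : α → β) (p : ∀ u v : α, F.Adj u v → H.Walk (f u) (f v)),
    Function.Injective f ∧
    (∀ u v (h : F.Adj u v), (p u v h).IsPath) ∧
    (∀ u v (h : F.Adj u v), 2 ≤ (p u v h).length) ∧
    (∀ u v (h : F.Adj u v), p v u h.symm = (p u v h).reverse) ∧
    (∀ u v (h : F.Adj u v), ∀ a : α, f a ∈ (p u v h).support → a = u ∨ a = v) ∧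
    (∀ u v u' v' (h : F.Adj u v) (h' : F.Adj u' v'), s(u, v) ≠ s(u', v') →
      ∀ w : β, w ∈ (p u v h).support → w ∈ (p u' v' h').support → w ∈ Set.range f) ∧
    (∀ w : β, w ∈ Set.range f ∨ ∃ u v, ∃ h : F.Adj u v, w ∈ (p u v h).support) ∧
    (∀ e ∈ H.edgeSet, ∃ u v, ∃ h : F.Adj u v, e ∈ (p u v h).edges)

section Aux

variable {V : Type*} {G : SimpleGraph V}

/-- vertex at position `d` along a walk (start vertex as default). -/
def wAt {x y : V} (q : G.Walk x y) (d : ℕ) : V := q.support.getD d x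

lemma support_len {x y : V} (q : G.Walk x y) : q.support.length = q.length + 1 :=
  q.length_support

lemma wAt_eq_getElem {x y : V} (q : G.Walk x y) {d : ℕ} (hd : d ≤ q.length) :
    wAt q d = q.support[d]'(by rw [support_len]; omega) := by
  unfold wAt
  exact List.getD_eq_getElem _ _ _

lemma getElem_support_zero {x y : V} (q : G.Walk x y)
    (h : 0 < q.support.length) : q.support[0] = x := by
  cases q <;> rfl

lemma getElem_support_length {x y : V} (q : G.Walk x y)
    (h : q.length < q.support.length) : q.support[q.length] = y := by
  induction q with
  | nil => rfl
  | cons ha r ih =>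
      simp only [Walk.support_cons, Walk.length_cons]
      rw [List.getElem_cons_succ]
      exact ih (by rw [support_len]; omega)

lemma wAt_zero {x y : V} (q : G.Walk x y) : wAt q 0 = x := by
  rw [wAt_eq_getElem q (Nat.zero_le _)]
  exact getElem_support_zero q _

lemma wAt_end {x y : V} (q : G.Walk x y) : wAt q q.length = y := by
  rw [wAt_eq_getElem q le_rfl]
  exact getElem_support_length q _

lemma wAt_mem {x y : V} (q : G.Walk x y) {d : ℕ} (hd : d ≤ q.length) :
    wAt q d ∈ q.support := by
  rw [wAt_eq_getElem q hd]; exact List.getElem_mem _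

lemma wAt_adj {x y : V} (q : G.Walk x y) {d : ℕ} (hd : d < q.length) :
    G.Adj (wAt q d) (wAt q (d + 1)) := by
  rw [wAt_eq_getElem q hd.le, wAt_eq_getElem q (by omega)]
  have hc := q.isChain_adj_support
  rw [List.isChain_iff_getElem] at hc
  have := hc d (by rw [support_len]; omega)
  simpa using this

lemma wAt_inj {x y : V} {q : G.Walk x y} (hq : q.IsPath) {d d' : ℕ}
    (hd : d ≤ q.length) (hd' : d' ≤ q.length) (h : wAt q d = wAt q d') : d = d' := by
  rw [wAt_eq_getElem q hd, wAt_eq_getElem q hd'] at h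
  exact (hq.support_nodup.getElem_inj_iff).mp h

variable [DecidableEq V]

lemma indexOf_wAt {x y : V} {q : G.Walk x y} (hq : q.IsPath) {d : ℕ}
    (hd : d ≤ q.length) : q.support.idxOf (wAt q d) = d := by
  rw [wAt_eq_getElem q hd]
  exact List.Nodup.idxOf_getElem hq.support_nodup d _

lemma wAt_indexOf {x y : V} {q : G.Walk x y} {w : V} (hw : w ∈ q.support) :
    wAt q (q.support.idxOf w) = w := by
  have h : q.support.idxOf w < q.support.length := List.idxOf_lt_length_iff.2 hw
  rw [wAt, List.getD_eq_getElem _ _ h]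
  exact List.getElem_idxOf h

lemma indexOf_le_length {x y : V} {q : G.Walk x y} {w : V} (hw : w ∈ q.support) :
    q.support.idxOf w ≤ q.length := by
  have h : q.support.idxOf w < q.support.length := List.idxOf_lt_length_iff.2 hw
  rw [support_len] at h; omega

lemma indexOf_reverse_list {l : List V} (hnd : l.Nodup) {w : V} (hw : w ∈ l) :
    l.reverse.idxOf w = l.length - 1 - l.idxOf w := by
  have hi : l.idxOf w < l.length := List.idxOf_lt_length_iff.2 hw
  have hj : l.length - 1 - l.idxOf w < l.reverse.length := by
    rw [List.length_reverse]; omega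
  have key : l.reverse[l.length - 1 - l.idxOf w] = w := by
    rw [List.getElem_reverse]
    have h2 : l.length - 1 - (l.length - 1 - l.idxOf w) = l.idxOf w := by omega
    simp only [h2]
    exact List.getElem_idxOf hi
  have := List.Nodup.idxOf_getElem (List.nodup_reverse.mpr hnd) (l.length - 1 - l.idxOf w) hj
  rw [key] at this
  exact this

lemma indexOf_reverse_walk {x y : V} {q : G.Walk x y} (hq : q.IsPath) {w : V}
    (hw : w ∈ q.support) :
    q.reverse.support.idxOf w = q.length - q.support.idxOf w := by
  rw [Walk.support_reverse, indexOf_reverse_list hq.support_nodup hw, support_len]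
  omega

lemma edge_idx {x y : V} {q : G.Walk x y} (hq : q.IsPath) {w z : V}
    (he : s(w, z) ∈ q.edges) :
    q.support.idxOf z = q.support.idxOf w + 1 ∨
      q.support.idxOf w = q.support.idxOf z + 1 := by
  induction q with
  | nil => simp at he
  | cons ha r ih =>
      rename_i a b c
      rw [Walk.edges_cons, List.mem_cons] at he
      have hnd := hq.support_nodup
      rw [Walk.support_cons, List.nodup_cons] at hnd
      rcases he with he | he
      · rw [Sym2.eq_iff] at he
        have hbr : b ∈ r.support := r.start_mem_support
        rcases he with ⟨h1, h2⟩ | ⟨h1, h2⟩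
        · subst h1; subst h2
          left
          rw [Walk.support_cons, List.idxOf_cons_self,
            List.idxOf_cons_ne _ (fun h => hnd.1 (by rw [h]; exact hbr)),
            show r.support.idxOf z = 0 from ?_]
          · rw [r.support_eq_cons, List.idxOf_cons_self]
        · subst h1; subst h2
          right
          rw [Walk.support_cons, List.idxOf_cons_self,
            List.idxOf_cons_ne _ (fun h => hnd.1 (by rw [h]; exact hbr)),
            show r.support.idxOf w = 0 from ?_]
          · rw [r.support_eq_cons, List.idxOf_cons_self]
      · have hw' : w ∈ r.support := r.fst_mem_support_of_mem_edges he
        have hz' : z ∈ r.support := r.snd_mem_support_of_mem_edges he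
        have hq' : r.IsPath := by
          have := hq
          rw [Walk.cons_isPath_iff] at this
          exact this.1
        have := ih hq' he
        rw [Walk.support_cons,
          List.idxOf_cons_ne _ (fun h => hnd.1 (by rw [h]; exact hz')),
          List.idxOf_cons_ne _ (fun h => hnd.1 (by rw [h]; exact hw'))]
        omega


lemma wAt_reverse' {x y : V} {q : G.Walk x y} {d : ℕ} (hd : d ≤ q.length) :
    wAt q.reverse d = wAt q (q.length - d) := by
  have h1 : d ≤ q.reverse.length := by rw [Walk.length_reverse]; omega
  have hd2 : q.length - d ≤ q.length := by omega
  rw [wAt_eq_getElem q.reverse h1, wAt_eq_getElem q hd2]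
  have h2 : q.reverse.support = q.support.reverse := q.support_reverse
  have h3 : d < q.support.reverse.length := by
    rw [List.length_reverse, support_len]; omega
  have h4 : q.reverse.support[d]'(by rw [support_len, Walk.length_reverse]; omega)
      = q.support.reverse[d]'h3 := List.getElem_of_eq h2 _
  rw [h4, List.getElem_reverse]
  have h5 : q.support.length - 1 - d = q.length - d := by rw [support_len]; omega
  simp only [h5]

end Aux

/-- bundled data of a proper subdivision together with an enumeration of `α`. -/
structure SubD {α β : Type*} (F : SimpleGraph α) (H : SimpleGraph β) where
  f : α → β
  p : ∀ u v : α, F.Adj u v → H.Walk (f u) (f v)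
  g : α → ℕ
  hg : Function.Injective g
  hf : Function.Injective f
  hpath : ∀ u v h, (p u v h).IsPath
  hlen2 : ∀ u v h, 2 ≤ (p u v h).length
  hrev : ∀ u v (h : F.Adj u v), p v u h.symm = (p u v h).reverse
  hbr : ∀ u v h a, f a ∈ (p u v h).support → a = u ∨ a = v
  hdisj : ∀ u v u' v' (h : F.Adj u v) (h' : F.Adj u' v'), s(u, v) ≠ s(u', v') →
      ∀ w : β, w ∈ (p u v h).support → w ∈ (p u' v' h').support → w ∈ Set.range f
  hcov : ∀ w : β, w ∈ Set.range f ∨ ∃ u v, ∃ h : F.Adj u v, w ∈ (p u v h).support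
  hedg : ∀ e ∈ H.edgeSet, ∃ u v, ∃ h : F.Adj u v, e ∈ (p u v h).edges

namespace SubD
variable {α β : Type*} [Fintype β] [DecidableEq β] {F : SimpleGraph α} {H : SimpleGraph β}

/-- block size -/
def C (β : Type*) [Fintype β] : ℕ := Fintype.card β + 2

lemma C_pos : 0 < C β := by simp [C]

lemma len_lt_C (S : SubD F H) (u v : α) (h : F.Adj u v) : (S.p u v h).length + 1 < C β := by
  have h1 : (S.p u v h).support.length ≤ Fintype.card β :=
    (S.hpath u v h).support_nodup.length_le_card
  rw [support_len] at h1
  simp only [C]; omega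

noncomputable def pk (S : SubD F H) (w : β) (hw : w ∉ Set.range S.f) :
    Σ' (u : α) (v : α) (h : F.Adj u v), w ∈ (S.p u v h).support :=
  have h1 := (S.hcov w).resolve_left hw
  ⟨h1.choose, h1.choose_spec.choose, h1.choose_spec.choose_spec.choose,
    h1.choose_spec.choose_spec.choose_spec⟩


open Classical in
noncomputable def tAux (S : SubD F H) (w : β) :
    (Σ' (u : α) (v : α) (h : F.Adj u v), w ∈ (S.p u v h).support) → ℕ
  | ⟨u, v, h, _⟩ =>
    let q := S.p u v h
    let d := q.support.idxOf w
    if S.g u < S.g v then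
      (if d = q.length - 1 ∧ 3 ≤ q.length then S.g v * C β + 1 else S.g u * C β + d)
    else
      (if d = 1 ∧ 3 ≤ q.length then S.g u * C β + 1 else S.g v * C β + (q.length - d))

open Classical in
lemma tAux_mk (S : SubD F H) (w : β) {u v : α} (h : F.Adj u v)
    (m : w ∈ (S.p u v h).support) :
    S.tAux w ⟨u, v, h, m⟩ =
      (let q := S.p u v h
       let d := q.support.idxOf w
       if S.g u < S.g v then
        (if d = q.length - 1 ∧ 3 ≤ q.length then S.g v * C β + 1 else S.g u * C β + d)
       else
        (if d = 1 ∧ 3 ≤ q.length then S.g u * C β + 1 else S.g v * C β + (q.length - d))) := rfl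

open Classical in
/-- the time function -/
noncomputable def t (S : SubD F H) (w : β) : ℕ :=
  if hw : w ∈ Set.range S.f then S.g hw.choose * C β
  else S.tAux w (S.pk w hw)

lemma t_branch (S : SubD F H) (a : α) : S.t (S.f a) = S.g a * C β := by
  have hw : S.f a ∈ Set.range S.f := ⟨a, rfl⟩
  unfold t
  rw [dif_pos hw]
  congr 1
  exact congrArg S.g (S.hf hw.choose_spec)

lemma not_range_wAt (S : SubD F H) {u v : α} (h : F.Adj u v) {d : ℕ}
    (hd1 : 1 ≤ d) (hd2 : d ≤ (S.p u v h).length - 1) :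
    wAt (S.p u v h) d ∉ Set.range S.f := by
  rintro ⟨c, hc⟩
  have hlen := S.hlen2 u v h
  have hmem : wAt (S.p u v h) d ∈ (S.p u v h).support := wAt_mem _ (by omega)
  rcases S.hbr u v h c (by rw [hc]; exact hmem) with hcu | hcv
  · have h0 : wAt (S.p u v h) 0 = wAt (S.p u v h) d := by
      rw [wAt_zero]; exact hcu ▸ hc
    have := wAt_inj (S.hpath u v h) (by omega) (by omega) h0
    omega
  · have h0 : wAt (S.p u v h) (S.p u v h).length = wAt (S.p u v h) d := by
      rw [wAt_end]; exact hcv ▸ hc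
    have := wAt_inj (S.hpath u v h) le_rfl (by omega) h0
    omega

lemma path_unique (S : SubD F H) {u v u' v' : α} (h : F.Adj u v) (h' : F.Adj u' v')
    {w : β} (hw : w ∉ Set.range S.f) (m : w ∈ (S.p u v h).support)
    (m' : w ∈ (S.p u' v' h').support) : s(u, v) = s(u', v') := by
  by_contra hne
  exact hw (S.hdisj u v u' v' h h' hne w m m')

/-- evaluation of `t` at internal vertices of an oriented path. -/
lemma t_int (S : SubD F H) {u v : α} (h : F.Adj u v) (hg : S.g u < S.g v) {d : ℕ}
    (hd1 : 1 ≤ d) (hd2 : d ≤ (S.p u v h).length - 1) :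
    S.t (wAt (S.p u v h) d) =
      if d = (S.p u v h).length - 1 ∧ 3 ≤ (S.p u v h).length then S.g v * C β + 1
      else S.g u * C β + d := by
  have hlen := S.hlen2 u v h
  have hw : wAt (S.p u v h) d ∉ Set.range S.f := S.not_range_wAt h hd1 hd2
  have hmem : wAt (S.p u v h) d ∈ (S.p u v h).support := wAt_mem _ (by omega)
  unfold t
  rw [dif_neg hw]
  rcases hpk : S.pk _ hw with ⟨u₁, v₁, h₁, m₁⟩
  rw [S.tAux_mk _ h₁ m₁]
  simp only
  have hkey := S.path_unique h₁ h hw m₁ hmem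
  rw [Sym2.eq_iff] at hkey
  rcases hkey with ⟨rfl, rfl⟩ | ⟨rfl, rfl⟩
  · have hq : S.p u₁ v₁ h₁ = S.p u₁ v₁ h := rfl
    rw [hq, indexOf_wAt (S.hpath u₁ v₁ h) (by omega), if_pos hg]
  · -- chosen orientation is reversed: u₁ = v, v₁ = u
    have hq : S.p u₁ v₁ h₁ = (S.p v₁ u₁ h).reverse := S.hrev v₁ u₁ h
    have hnot : ¬ S.g u₁ < S.g v₁ := by omega
    rw [hq, if_neg hnot]
    have hidx : (S.p v₁ u₁ h).reverse.support.idxOf (wAt (S.p v₁ u₁ h) d)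
        = (S.p v₁ u₁ h).length - d := by
      rw [indexOf_reverse_walk (S.hpath v₁ u₁ h) hmem,
        indexOf_wAt (S.hpath v₁ u₁ h) (by omega)]
    rw [hidx, Walk.length_reverse]
    set n := (S.p v₁ u₁ h).length with hn
    have hcond : (n - d = 1 ∧ 3 ≤ n) ↔ (d = n - 1 ∧ 3 ≤ n) := by omega
    by_cases hfar : d = n - 1 ∧ 3 ≤ n
    · rw [if_pos (hcond.mpr hfar), if_pos hfar]
    · rw [if_neg (fun hc => hfar (hcond.mp hc)), if_neg hfar]
      congr 1
      omega

/-- normal form for vertices -/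
lemma nf (S : SubD F H) (w : β) :
    (∃ a, w = S.f a) ∨ ∃ u v, ∃ h : F.Adj u v, S.g u < S.g v ∧ ∃ d,
      1 ≤ d ∧ d ≤ (S.p u v h).length - 1 ∧ w = wAt (S.p u v h) d := by
  by_cases hw : w ∈ Set.range S.f
  · exact Or.inl ⟨hw.choose, hw.choose_spec.symm⟩
  obtain ⟨u, v, h, hm⟩ := (S.hcov w).resolve_left hw
  right
  have hlen := S.hlen2 u v h
  have hpath := S.hpath u v h
  set d := (S.p u v h).support.idxOf w with hd
  have hdle : d ≤ (S.p u v h).length := indexOf_le_length hm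
  have hweq : w = wAt (S.p u v h) d := (wAt_indexOf hm).symm
  have hd0 : d ≠ 0 := by
    intro h0
    exact hw ⟨u, by rw [hweq, h0, wAt_zero]⟩
  have hdn : d ≠ (S.p u v h).length := by
    intro h0
    exact hw ⟨v, by rw [hweq, h0, wAt_end]⟩
  have huv : u ≠ v := h.ne
  rcases lt_trichotomy (S.g u) (S.g v) with hg | hg | hg
  · exact ⟨u, v, h, hg, d, by omega, by omega, hweq⟩
  · exact absurd (S.hg hg) huv
  · refine ⟨v, u, h.symm, hg, (S.p u v h).length - d, by omega, ?_, ?_⟩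
    · rw [S.hrev u v h, Walk.length_reverse]; omega
    · rw [hweq]
      have hrev : S.p v u h.symm = (S.p u v h).reverse := S.hrev u v h
      rw [hrev]
      have h1 : wAt (S.p u v h).reverse ((S.p u v h).length - d)
          = wAt (S.p u v h) d := by
        have hm' : wAt (S.p u v h) d ∈ (S.p u v h).reverse.support := by
          rw [Walk.support_reverse, List.mem_reverse]; rw [← hweq]; exact hm
        have := wAt_indexOf hm'
        rw [indexOf_reverse_walk hpath (by rw [← hweq]; exact hm),
          indexOf_wAt hpath hdle] at this
        exact this
      rw [h1]

lemma two_le_C : 2 ≤ C β := by simp [C]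

lemma uniqC {a b x y : ℕ} (hx : x < C β) (hy : y < C β)
    (h : a * C β + x = b * C β + y) : a = b ∧ x = y := by
  have h1 : x = y := by
    have h2 : (a * C β + x) % C β = (b * C β + y) % C β := by rw [h]
    rwa [add_comm (a * C β) x, add_comm (b * C β) y, Nat.add_mul_mod_self_right,
      Nat.add_mul_mod_self_right, Nat.mod_eq_of_lt hx, Nat.mod_eq_of_lt hy] at h2
  subst h1
  refine ⟨?_, rfl⟩
  have h3 : a * C β = b * C β := by omega
  exact Nat.eq_of_mul_eq_mul_right (by have := (two_le_C : 2 ≤ C β); omega) h3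

lemma neC {a b x y : ℕ} (hx : x < C β) (hy : y < C β) (hne : a ≠ b ∨ x ≠ y) :
    a * C β + x ≠ b * C β + y := by
  intro h
  rcases uniqC hx hy h with ⟨h1, h2⟩
  tauto

lemma base_lt {a b x y : ℕ} (hab : a < b) (hx : x < C β) :
    a * C β + x < b * C β + y := by
  have h1 : a * C β + x < (a + 1) * C β := by rw [add_one_mul]; omega
  have h2 : (a + 1) * C β ≤ b * C β := Nat.mul_le_mul_right _ (by omega)
  omega

lemma neC0 {a b x : ℕ} (hxC : x < C β) (hne : a ≠ b ∨ 0 ≠ x) :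
    a * C β ≠ b * C β + x := by
  have h := neC (β := β) (x := 0) (y := x)
    (by have := (two_le_C : 2 ≤ C β); omega) hxC hne
  simpa using h

lemma neC0' {a b x : ℕ} (hxC : x < C β) (hne : a ≠ b ∨ x ≠ 0) :
    a * C β + x ≠ b * C β := by
  have h := neC (β := β) (x := x) (y := 0) hxC
    (by have := (two_le_C : 2 ≤ C β); omega) (by tauto)
  simpa using h

lemma edge_on (S : SubD F H) {u v : α} (h : F.Adj u v) {w z : β}
    (hw : w ∉ Set.range S.f) (hm : w ∈ (S.p u v h).support) (hz : H.Adj w z) :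
    s(w, z) ∈ (S.p u v h).edges := by
  obtain ⟨u', v', h', he⟩ := S.hedg s(w, z) (H.mem_edgeSet.mpr hz)
  have hm' : w ∈ (S.p u' v' h').support := (S.p u' v' h').fst_mem_support_of_mem_edges he
  have hkey := S.path_unique h' h hw hm' hm
  rw [Sym2.eq_iff] at hkey
  rcases hkey with ⟨h1, h2⟩ | ⟨h1, h2⟩
  · subst h1; subst h2; exact he
  · subst h1; subst h2
    have hq : S.p u' v' h' = (S.p v' u' h).reverse := S.hrev v' u' h
    rw [hq, Walk.edges_reverse, List.mem_reverse] at he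
    exact he

lemma nbr (S : SubD F H) {u v : α} (h : F.Adj u v) {d : ℕ}
    (hd1 : 1 ≤ d) (hd2 : d ≤ (S.p u v h).length - 1) {z : β}
    (hz : H.Adj (wAt (S.p u v h) d) z) :
    z = wAt (S.p u v h) (d - 1) ∨ z = wAt (S.p u v h) (d + 1) := by
  have hlen := S.hlen2 u v h
  have hpath := S.hpath u v h
  have hw := S.not_range_wAt h hd1 hd2
  have hm : wAt (S.p u v h) d ∈ (S.p u v h).support := wAt_mem _ (by omega)
  have he := S.edge_on h hw hm hz
  have hzm : z ∈ (S.p u v h).support := (S.p u v h).snd_mem_support_of_mem_edges he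
  have hidx := edge_idx hpath he
  rw [indexOf_wAt hpath (by omega)] at hidx
  rcases hidx with hidx | hidx
  · right; rw [← hidx]; exact (wAt_indexOf hzm).symm
  · left
    have : (S.p u v h).support.idxOf z = d - 1 := by omega
    rw [← this]; exact (wAt_indexOf hzm).symm

lemma nbr_branch (S : SubD F H) {a : α} {z : β} (hz : H.Adj (S.f a) z) :
    ∃ u v, ∃ h : F.Adj u v, S.g u < S.g v ∧
      ((a = u ∧ z = wAt (S.p u v h) 1) ∨
        (a = v ∧ z = wAt (S.p u v h) ((S.p u v h).length - 1))) := by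
  obtain ⟨u', v', h', he'⟩ := S.hedg s(S.f a, z) (H.mem_edgeSet.mpr hz)
  -- orient the path
  have horient : ∃ u v, ∃ h : F.Adj u v, S.g u < S.g v ∧ s(S.f a, z) ∈ (S.p u v h).edges := by
    rcases lt_trichotomy (S.g u') (S.g v') with hg | hg | hg
    · exact ⟨u', v', h', hg, he'⟩
    · exact absurd (S.hg hg) h'.ne
    · refine ⟨v', u', h'.symm, hg, ?_⟩
      rw [S.hrev u' v' h', Walk.edges_reverse, List.mem_reverse]
      exact he'
  obtain ⟨u, v, h, hg, he⟩ := horient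
  have hlen := S.hlen2 u v h
  have hpath := S.hpath u v h
  have hfm : S.f a ∈ (S.p u v h).support := (S.p u v h).fst_mem_support_of_mem_edges he
  have hzm : z ∈ (S.p u v h).support := (S.p u v h).snd_mem_support_of_mem_edges he
  have hidx := edge_idx hpath he
  have hzle := indexOf_le_length hzm
  refine ⟨u, v, h, hg, ?_⟩
  rcases S.hbr u v h a hfm with rfl | rfl
  · left
    refine ⟨rfl, ?_⟩
    have h0 : (S.p a v h).support.idxOf (S.f a) = 0 := by
      have h0' := indexOf_wAt (q := S.p a v h) hpath (Nat.zero_le _)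
      rwa [wAt_zero] at h0'
    rw [h0] at hidx
    have h1 : (S.p a v h).support.idxOf z = 1 := by omega
    rw [← h1]; exact (wAt_indexOf hzm).symm
  · right
    refine ⟨rfl, ?_⟩
    have h0 : (S.p u a h).support.idxOf (S.f a) = (S.p u a h).length := by
      have h0' := indexOf_wAt (q := S.p u a h) hpath (le_refl (S.p u a h).length)
      rwa [wAt_end] at h0'
    rw [h0] at hidx
    have h1 : (S.p u a h).support.idxOf z = (S.p u a h).length - 1 := by omega
    rw [← h1]; exact (wAt_indexOf hzm).symm

lemma not_adj_branch (S : SubD F H) (a b : α) : ¬ H.Adj (S.f a) (S.f b) := by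
  intro hadj
  obtain ⟨u, v, h, hg, hcase⟩ := S.nbr_branch hadj
  have hlen := S.hlen2 u v h
  have hpath := S.hpath u v h
  rcases hcase with ⟨rfl, hb⟩ | ⟨rfl, hb⟩
  · have hbm : S.f b ∈ (S.p a v h).support := by rw [hb]; exact wAt_mem _ (by omega)
    rcases S.hbr a v h b hbm with rfl | rfl
    · exact hadj.ne rfl
    · have : wAt (S.p a b h) (S.p a b h).length = wAt (S.p a b h) 1 := by
        rw [wAt_end]; exact hb
      have := wAt_inj hpath le_rfl (by omega) this
      omega
  · have hbm : S.f b ∈ (S.p u a h).support := by rw [hb]; exact wAt_mem _ (by omega)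
    rcases S.hbr u a h b hbm with rfl | rfl
    · have : wAt (S.p b a h) 0 = wAt (S.p b a h) ((S.p b a h).length - 1) := by
        rw [wAt_zero]; exact hb
      have := wAt_inj hpath (by omega) (by omega) this
      omega
    · exact hadj.ne rfl

lemma t_nbr_branch (S : SubD F H) {a : α} {z : β} (hz : H.Adj (S.f a) z) :
    S.t z = S.g a * C β + 1 ∨ S.t z < S.g a * C β := by
  obtain ⟨u, v, h, hg, hcase⟩ := S.nbr_branch hz
  have hlen := S.hlen2 u v h
  have hLC := S.len_lt_C u v h
  rcases hcase with ⟨rfl, rfl⟩ | ⟨rfl, rfl⟩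
  · left
    rw [S.t_int h hg (by omega) (by omega), if_neg (by omega)]
  · have ht := S.t_int h hg (d := (S.p u a h).length - 1) (by omega) (by omega)
    by_cases hfar : (S.p u a h).length - 1 = (S.p u a h).length - 1 ∧ 3 ≤ (S.p u a h).length
    · left; rw [ht, if_pos hfar]
    · right
      rw [ht, if_neg hfar]
      have hb := base_lt (β := β) (y := 0) hg
        (show (S.p u a h).length - 1 < C β by omega)
      omega

lemma key (S : SubD F H) {w z z' : β} (hz : H.Adj w z) (hz' : H.Adj w z')
    (h1 : ¬ S.t z < S.t w) (h2 : ¬ S.t z' < S.t w) : S.t z = S.t z' := by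
  rcases S.nf w with ⟨a, rfl⟩ | ⟨u, v, h, hg, d, hd1, hd2, rfl⟩
  · rw [S.t_branch] at h1 h2
    rcases S.t_nbr_branch hz with e1 | e1
    · rcases S.t_nbr_branch hz' with e2 | e2
      · rw [e1, e2]
      · exact absurd (by omega : S.t z' < S.g a * C β) h2
    · exact absurd (by omega : S.t z < S.g a * C β) h1
  · have hlen := S.hlen2 u v h
    have hLC := S.len_lt_C u v h
    have hpath := S.hpath u v h
    have htw := S.t_int h hg hd1 hd2
    by_cases hfar : d = (S.p u v h).length - 1 ∧ 3 ≤ (S.p u v h).length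
    · rw [if_pos hfar] at htw
      exfalso; apply h1
      rw [htw]
      rcases S.nbr h hd1 hd2 hz with rfl | rfl
      · have ht := S.t_int h hg (d := d - 1) (by omega) (by omega)
        rw [ht, if_neg (by omega)]
        exact base_lt hg (by omega)
      · have hdl : d + 1 = (S.p u v h).length := by omega
        rw [hdl, wAt_end, S.t_branch]
        omega
    · rw [if_neg hfar] at htw
      have hlow : S.t (wAt (S.p u v h) (d - 1)) < S.t (wAt (S.p u v h) d) := by
        rw [htw]
        by_cases hd1' : d = 1
        · subst hd1'
          norm_num
          rw [wAt_zero, S.t_branch]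
        · have ht := S.t_int h hg (d := d - 1) (by omega) (by omega)
          rw [ht, if_neg (by omega)]
          omega
      rcases S.nbr h hd1 hd2 hz with rfl | rfl
      · exact absurd hlow h1
      · rcases S.nbr h hd1 hd2 hz' with rfl | rfl
        · exact absurd hlow h2
        · rfl

lemma adj_t_ne (S : SubD F H) {w z : β} (hz : H.Adj w z) : S.t w ≠ S.t z := by
  rcases S.nf w with ⟨a, rfl⟩ | ⟨u, v, h, hg, d, hd1, hd2, rfl⟩
  · rw [S.t_branch]
    obtain ⟨u, v, h, hg, hcase⟩ := S.nbr_branch hz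
    have hlen := S.hlen2 u v h
    have hLC := S.len_lt_C u v h
    rcases hcase with ⟨rfl, rfl⟩ | ⟨rfl, rfl⟩
    · rw [S.t_int h hg (by omega) (by omega), if_neg (by omega)]
      omega
    · have ht := S.t_int h hg (d := (S.p u a h).length - 1) (by omega) (by omega)
      rw [ht]
      by_cases hfar : (S.p u a h).length - 1 = (S.p u a h).length - 1 ∧ 3 ≤ (S.p u a h).length
      · rw [if_pos hfar]; omega
      · rw [if_neg hfar]
        exact neC0 (by omega) (Or.inl (Ne.symm (ne_of_lt hg)))
  · have hlen := S.hlen2 u v h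
    have hLC := S.len_lt_C u v h
    have htw := S.t_int h hg hd1 hd2
    rcases S.nbr h hd1 hd2 hz with rfl | rfl
    · -- z = wAt (d-1)
      by_cases hd1' : d = 1
      · subst hd1'
        have hz0 : wAt (S.p u v h) (1 - 1) = S.f u := by
          have : (1 : ℕ) - 1 = 0 := rfl
          rw [this, wAt_zero]
        rw [hz0, S.t_branch, htw]
        by_cases hfar : 1 = (S.p u v h).length - 1 ∧ 3 ≤ (S.p u v h).length
        · rw [if_pos hfar]
          exact neC0' (by omega) (Or.inl (Ne.symm (ne_of_lt hg)))
        · rw [if_neg hfar]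
          exact neC0' (by omega) (Or.inr (by omega))
      · have ht := S.t_int h hg (d := d - 1) (by omega) (by omega)
        rw [htw, ht]
        have hfar' : ¬ (d - 1 = (S.p u v h).length - 1 ∧ 3 ≤ (S.p u v h).length) := by omega
        rw [if_neg hfar']
        by_cases hfar : d = (S.p u v h).length - 1 ∧ 3 ≤ (S.p u v h).length
        · rw [if_pos hfar]
          exact neC (by omega) (by omega) (Or.inl (Ne.symm (ne_of_lt hg)))
        · rw [if_neg hfar]
          exact neC (by omega) (by omega) (Or.inr (by omega))
    · -- z = wAt (d+1)
      by_cases hdl : d + 1 = (S.p u v h).length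
      · rw [hdl, wAt_end, S.t_branch, htw]
        by_cases hfar : d = (S.p u v h).length - 1 ∧ 3 ≤ (S.p u v h).length
        · rw [if_pos hfar]; omega
        · rw [if_neg hfar]
          exact neC0' (by omega) (Or.inl (ne_of_lt hg))
      · have hfarw : ¬ (d = (S.p u v h).length - 1 ∧ 3 ≤ (S.p u v h).length) := by omega
        rw [htw, if_neg hfarw]
        have ht := S.t_int h hg (d := d + 1) (by omega) (by omega)
        rw [ht]
        by_cases hfar : d + 1 = (S.p u v h).length - 1 ∧ 3 ≤ (S.p u v h).length
        · rw [if_pos hfar]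
          exact neC (by omega) (by omega) (Or.inl (ne_of_lt hg))
        · rw [if_neg hfar]
          exact neC (by omega) (by omega) (Or.inr (by omega))

lemma idx_bounds (S : SubD F H) {u v : α} {h : F.Adj u v} {m : β}
    (hw : m ∉ Set.range S.f) (hm : m ∈ (S.p u v h).support) :
    1 ≤ (S.p u v h).support.idxOf m ∧
      (S.p u v h).support.idxOf m ≤ (S.p u v h).length - 1 := by
  have hlen := S.hlen2 u v h
  have hdle := indexOf_le_length hm
  have hweq := wAt_indexOf hm
  constructor
  · rcases Nat.eq_zero_or_pos ((S.p u v h).support.idxOf m) with h0 | h0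
    · exfalso; apply hw; exact ⟨u, by rw [← hweq, h0, wAt_zero]⟩
    · omega
  · rcases Nat.lt_or_ge ((S.p u v h).support.idxOf m) (S.p u v h).length with h0 | h0
    · omega
    · exfalso; apply hw
      exact ⟨v, by rw [← hweq, (by omega : (S.p u v h).support.idxOf m = (S.p u v h).length), wAt_end]⟩

open Classical in
noncomputable def nbrAux (S : SubD F H) (m : β) (k : ℤ) :
    (Σ' (u : α) (v : α) (h : F.Adj u v), m ∈ (S.p u v h).support) → β
  | ⟨u, v, h, _⟩ =>
      wAt (S.p u v h) (((S.p u v h).support.idxOf m : ℤ) + k).toNat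

open Classical in
noncomputable def nbrL (S : SubD F H) (m : β) : β :=
  if hw : m ∈ Set.range S.f then m else S.nbrAux m (-1) (S.pk m hw)

open Classical in
noncomputable def nbrR (S : SubD F H) (m : β) : β :=
  if hw : m ∈ Set.range S.f then m else S.nbrAux m 1 (S.pk m hw)

lemma nbr_chosen (S : SubD F H) {m z : β} (hw : m ∉ Set.range S.f) (hz : H.Adj m z) :
    z = S.nbrL m ∨ z = S.nbrR m := by
  unfold nbrL nbrR
  rw [dif_neg hw, dif_neg hw]
  rcases hpk : S.pk m hw with ⟨u, v, h, mm⟩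
  have hb := S.idx_bounds hw mm
  have hlen := S.hlen2 u v h
  set d := (S.p u v h).support.idxOf m with hd
  have hweq : m = wAt (S.p u v h) d := (wAt_indexOf mm).symm
  have hz' : H.Adj (wAt (S.p u v h) d) z := by rw [← hweq]; exact hz
  have hres := S.nbr h hb.1 hb.2 hz'
  unfold nbrAux
  simp only
  have hL : ((d : ℤ) + (-1)).toNat = d - 1 := by omega
  have hR : ((d : ℤ) + 1).toNat = d + 1 := by omega
  rw [hL, hR]
  exact hres

open Classical in
noncomputable def psiAux (S : SubD F H) (m : β) :
    (Σ' (u : α) (v : α) (h : F.Adj u v), m ∈ (S.p u v h).support) → β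
  | ⟨u, v, h, _⟩ =>
      if S.g u < S.g v then wAt (S.p u v h) 1
      else wAt (S.p u v h) ((S.p u v h).length - 1)

open Classical in
noncomputable def psiV (S : SubD F H) (m : β) : β :=
  if hw : m ∈ Set.range S.f then m else S.psiAux m (S.pk m hw)

lemma psi_spec (S : SubD F H) {a v : α} {h : F.Adj a v} {d : ℕ} (hg : S.g a < S.g v)
    (hd1 : 1 ≤ d) (hd2 : d ≤ (S.p a v h).length - 1) :
    S.psiV (wAt (S.p a v h) d) = wAt (S.p a v h) 1 := by
  have hlen := S.hlen2 a v h
  have hw := S.not_range_wAt h hd1 hd2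
  have hm : wAt (S.p a v h) d ∈ (S.p a v h).support := wAt_mem _ (by omega)
  unfold psiV
  rw [dif_neg hw]
  rcases hpk : S.pk _ hw with ⟨u₁, v₁, h₁, m₁⟩
  unfold psiAux
  simp only
  have hkey := S.path_unique h₁ h hw m₁ hm
  rw [Sym2.eq_iff] at hkey
  rcases hkey with ⟨h1, h2⟩ | ⟨h1, h2⟩
  · subst h1; subst h2
    rw [if_pos hg]
  · subst h1; subst h2
    rw [if_neg (by omega)]
    have hq : S.p u₁ v₁ h₁ = (S.p v₁ u₁ h).reverse := S.hrev v₁ u₁ h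
    rw [hq, Walk.length_reverse, wAt_reverse' (by omega)]
    congr 1
    omega

/-- classification of vertices with `t w = g a * C` -/
lemma class0 (S : SubD F H) {a : α} {w : β} (hw : S.t w = S.g a * C β) : w = S.f a := by
  rcases S.nf w with ⟨b, rfl⟩ | ⟨u, v, h, hg, d, hd1, hd2, rfl⟩
  · rw [S.t_branch] at hw
    have hb : S.g b = S.g a :=
      Nat.eq_of_mul_eq_mul_right (by have := (two_le_C : 2 ≤ C β); omega) hw
    rw [S.hg hb]
  · exfalso
    have hlen := S.hlen2 u v h
    have hLC := S.len_lt_C u v h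
    have ht := S.t_int h hg hd1 hd2
    rw [ht] at hw
    by_cases hfar : d = (S.p u v h).length - 1 ∧ 3 ≤ (S.p u v h).length
    · rw [if_pos hfar] at hw
      exact neC0' (by omega) (Or.inr (by omega)) hw
    · rw [if_neg hfar] at hw
      exact neC0' (by omega) (Or.inr (by omega)) hw

/-- classification of vertices with `t w = g a * C + 1` -/
lemma class1 (S : SubD F H) {a : α} {w : β} (hw : S.t w = S.g a * C β + 1) :
    ∃ u v, ∃ h : F.Adj u v, S.g u < S.g v ∧
      ((v = a ∧ 3 ≤ (S.p u v h).length ∧ w = wAt (S.p u v h) ((S.p u v h).length - 1)) ∨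
        (u = a ∧ w = wAt (S.p u v h) 1)) := by
  rcases S.nf w with ⟨b, rfl⟩ | ⟨u, v, h, hg, d, hd1, hd2, rfl⟩
  · rw [S.t_branch] at hw
    exact absurd hw (neC0 (by have := (two_le_C : 2 ≤ C β); omega) (Or.inr (by omega)))
  · have hlen := S.hlen2 u v h
    have hLC := S.len_lt_C u v h
    have ht := S.t_int h hg hd1 hd2
    rw [ht] at hw
    refine ⟨u, v, h, hg, ?_⟩
    by_cases hfar : d = (S.p u v h).length - 1 ∧ 3 ≤ (S.p u v h).length
    · rw [if_pos hfar] at hw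
      obtain ⟨hga, -⟩ := uniqC (by omega) (by omega) hw
      left
      exact ⟨S.hg hga, hfar.2, by rw [hfar.1]⟩
    · rw [if_neg hfar] at hw
      obtain ⟨hga, hd⟩ := uniqC (by omega) (by omega) hw
      right
      exact ⟨S.hg hga, by rw [hd]⟩

/-- classification of vertices with `t w = g a * C + o`, `2 ≤ o < C` -/
lemma class2 (S : SubD F H) {a : α} {w : β} {o : ℕ} (ho2 : 2 ≤ o) (hoC : o < C β)
    (hw : S.t w = S.g a * C β + o) :
    ∃ v, ∃ h : F.Adj a v, S.g a < S.g v ∧ o ≤ (S.p a v h).length - 1 ∧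
      w = wAt (S.p a v h) o := by
  rcases S.nf w with ⟨b, rfl⟩ | ⟨u, v, h, hg, d, hd1, hd2, rfl⟩
  · rw [S.t_branch] at hw
    exact absurd hw (neC0 hoC (Or.inr (by omega)))
  · have hlen := S.hlen2 u v h
    have hLC := S.len_lt_C u v h
    have ht := S.t_int h hg hd1 hd2
    rw [ht] at hw
    by_cases hfar : d = (S.p u v h).length - 1 ∧ 3 ≤ (S.p u v h).length
    · rw [if_pos hfar] at hw
      obtain ⟨-, h1⟩ := uniqC (by omega) hoC hw
      omega
    · rw [if_neg hfar] at hw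
      obtain ⟨hga, hd⟩ := uniqC (by omega) hoC hw
      obtain rfl : u = a := S.hg hga
      subst hd
      exact ⟨v, h, hg, hd2, rfl⟩

/-- vertices at time `g a * C + 1` are neighbours of `f a` -/
lemma class1_adj (S : SubD F H) {a : α} {w : β} (hw : S.t w = S.g a * C β + 1) :
    H.Adj (S.f a) w := by
  obtain ⟨u, v, h, hg, hcase⟩ := S.class1 hw
  have hlen := S.hlen2 u v h
  rcases hcase with ⟨rfl, h3, rfl⟩ | ⟨rfl, rfl⟩
  · have hadj := wAt_adj (S.p u v h) (d := (S.p u v h).length - 1) (by omega)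
    have he : (S.p u v h).length - 1 + 1 = (S.p u v h).length := by omega
    rw [he, wAt_end] at hadj
    exact hadj.symm
  · have hadj := wAt_adj (S.p u v h) (d := 0) (by omega)
    rw [wAt_zero] at hadj
    exact hadj

/-- no triangles at a branch vertex -/
lemma tfb (S : SubD F H) (a : α) {x y : β} (hx : H.Adj (S.f a) x)
    (hy : H.Adj (S.f a) y) : ¬ H.Adj x y := by
  intro hxy
  obtain ⟨u, v, h, hg, hcase⟩ := S.nbr_branch hx
  have hlen := S.hlen2 u v h
  have hpath := S.hpath u v h
  rcases hcase with ⟨rfl, rfl⟩ | ⟨rfl, rfl⟩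
  · -- x = wAt (p a v h) 1
    rcases S.nbr h (d := 1) (by omega) (by omega) hxy with rfl | rfl
    · -- y = wAt 0 = f a
      rw [(by rfl : (1:ℕ) - 1 = 0), wAt_zero] at hy
      exact hy.ne rfl
    · -- y = wAt 2
      by_cases h2 : 2 = (S.p a v h).length
      · have h2' : 1 + 1 = (S.p a v h).length := by omega
        rw [h2', wAt_end] at hy
        exact S.not_adj_branch a v hy
      · have h2' : 2 ≤ (S.p a v h).length - 1 := by omega
        rcases S.nbr h (d := 2) (by omega) (by omega) hy.symm with he | he
        · have h0 : wAt (S.p a v h) 0 = wAt (S.p a v h) (2 - 1) := by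
            rw [wAt_zero]; exact he
          have := wAt_inj hpath (by omega) (by omega) h0
          omega
        · have h0 : wAt (S.p a v h) 0 = wAt (S.p a v h) (2 + 1) := by
            rw [wAt_zero]; exact he
          have := wAt_inj hpath (by omega) (by omega) h0
          omega
  · -- x = wAt (p u a h) (len - 1)
    rcases S.nbr h (d := (S.p u a h).length - 1) (by omega) (by omega) hxy with rfl | rfl
    · -- y = wAt (len - 2)
      by_cases h2 : (S.p u a h).length = 2
      · rw [show (S.p u a h).length - 1 - 1 = 0 by omega, wAt_zero] at hy
        exact S.not_adj_branch a u hy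
      · have h3 : 3 ≤ (S.p u a h).length := by omega
        rcases S.nbr h (d := (S.p u a h).length - 1 - 1) (by omega) (by omega) hy.symm with he | he
        · have h0 : wAt (S.p u a h) (S.p u a h).length
              = wAt (S.p u a h) ((S.p u a h).length - 1 - 1 - 1) := by
            rw [wAt_end]; exact he
          have := wAt_inj hpath le_rfl (by omega) h0
          omega
        · have h0 : wAt (S.p u a h) (S.p u a h).length
              = wAt (S.p u a h) ((S.p u a h).length - 1 - 1 + 1) := by
            rw [wAt_end]; exact he
          have := wAt_inj hpath le_rfl (by omega) h0
          omega
    · -- y = wAt (len - 1 + 1) = wAt len = f a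
      rw [show (S.p u a h).length - 1 + 1 = (S.p u a h).length by omega, wAt_end] at hy
      exact hy.ne rfl

/-- shape of earlier neighbours of vertices at time `g a * C + 1` -/
lemma nbr1_shape (S : SubD F H) {a : α} {x m : β} (hm : S.t m = S.g a * C β + 1)
    (hxm : H.Adj x m) (hx : S.t x < S.g a * C β + 1) :
    x = S.f a ∨ ∃ u, ∃ h : F.Adj u a, S.g u < S.g a ∧ 3 ≤ (S.p u a h).length ∧
      x = wAt (S.p u a h) ((S.p u a h).length - 2) := by
  obtain ⟨u, v, h, hg, hcase⟩ := S.class1 hm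
  have hlen := S.hlen2 u v h
  have hLC := S.len_lt_C u v h
  rcases hcase with ⟨rfl, h3, rfl⟩ | ⟨rfl, rfl⟩
  · -- m far-type on p u v h  (here a has been identified with v)
    rcases S.nbr h (d := (S.p u v h).length - 1) (by omega) (by omega) hxm.symm with rfl | rfl
    · right
      exact ⟨u, h, hg, h3, by rw [show (S.p u v h).length - 1 - 1 = (S.p u v h).length - 2 by omega]⟩
    · left
      rw [show (S.p u v h).length - 1 + 1 = (S.p u v h).length by omega, wAt_end]
  · -- m near-type on p u v h  (here a has been identified with u)
    rcases S.nbr h (d := 1) (by omega) (by omega) hxm.symm with rfl | rfl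
    · left
      rw [(by rfl : (1:ℕ) - 1 = 0), wAt_zero]
    · exfalso
      by_cases h2 : 1 + 1 = (S.p u v h).length
      · rw [h2, wAt_end, S.t_branch] at hx
        have hb := base_lt (β := β) (x := 1) (y := 0) hg (by omega)
        omega
      · have ht := S.t_int h hg (d := 1 + 1) (by omega) (by omega)
        rw [ht] at hx
        by_cases hfar : 1 + 1 = (S.p u v h).length - 1 ∧ 3 ≤ (S.p u v h).length
        · rw [if_pos hfar] at hx
          have hb := base_lt (β := β) (x := 1) (y := 1) hg (by omega)
          omega
        · rw [if_neg hfar] at hx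
          omega

/-- shape of earlier neighbours of vertices at time `g a * C + o`, `o ≥ 2` -/
lemma nbr2_shape (S : SubD F H) {a : α} {x m : β} {o : ℕ} (ho2 : 2 ≤ o) (hoC : o < C β)
    (hm : S.t m = S.g a * C β + o) (hxm : H.Adj x m) (hx : S.t x < S.g a * C β + o) :
    ∃ v, ∃ h : F.Adj a v, S.g a < S.g v ∧ o ≤ (S.p a v h).length - 1 ∧
      x = wAt (S.p a v h) (o - 1) := by
  obtain ⟨v, h, hg, hole, rfl⟩ := S.class2 ho2 hoC hm
  have hlen := S.hlen2 a v h
  have hLC := S.len_lt_C a v h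
  rcases S.nbr h (d := o) (by omega) (by omega) hxm.symm with rfl | rfl
  · exact ⟨v, h, hg, hole, rfl⟩
  · exfalso
    by_cases h2 : o + 1 = (S.p a v h).length
    · rw [h2, wAt_end, S.t_branch] at hx
      have hb := base_lt (β := β) (x := o) (y := 0) hg (by omega)
      omega
    · have ht := S.t_int h hg (d := o + 1) (by omega) (by omega)
      rw [ht] at hx
      by_cases hfar : o + 1 = (S.p a v h).length - 1 ∧ 3 ≤ (S.p a v h).length
      · rw [if_pos hfar] at hx
        have hb := base_lt (β := β) (x := o) (y := 1) hg (by omega)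
        omega
      · rw [if_neg hfar] at hx
        omega

/-- two distinct earlier `U`-vertices at a time of offset 1 cannot be adjacent -/
lemma inc1 (S : SubD F H) {a : α} {x y : β} (hxy : H.Adj x y)
    (hx : S.t x < S.g a * C β + 1) (hy : S.t y < S.g a * C β + 1)
    (hxm : ∃ m, S.t m = S.g a * C β + 1 ∧ H.Adj x m)
    (hym : ∃ m', S.t m' = S.g a * C β + 1 ∧ H.Adj y m') : False := by
  obtain ⟨m, hm, hxm'⟩ := hxm
  obtain ⟨m', hm', hym'⟩ := hym
  rcases S.nbr1_shape hm hxm' hx with rfl | ⟨u, h, hg, h3, rfl⟩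
  · rcases S.nbr1_shape hm' hym' hy with rfl | ⟨u', h', hg', h3', rfl⟩
    · exact hxy.ne rfl
    · -- Adj (f a) (wAt (p u' a h') (len-2)) : impossible
      have hlen' := S.hlen2 u' a h'
      have hpath' := S.hpath u' a h'
      rcases S.nbr h' (d := (S.p u' a h').length - 2) (by omega) (by omega) hxy.symm
        with he | he
      · have h0 : wAt (S.p u' a h') (S.p u' a h').length
            = wAt (S.p u' a h') ((S.p u' a h').length - 2 - 1) := by
          rw [wAt_end]; exact he
        have := wAt_inj hpath' le_rfl (by omega) h0
        omega
      · have h0 : wAt (S.p u' a h') (S.p u' a h').length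
            = wAt (S.p u' a h') ((S.p u' a h').length - 2 + 1) := by
          rw [wAt_end]; exact he
        have := wAt_inj hpath' le_rfl (by omega) h0
        omega
  · rcases S.nbr1_shape hm' hym' hy with rfl | ⟨u', h', hg', h3', rfl⟩
    · -- y = f a adjacent to internal x : same as above, symmetric
      have hlen' := S.hlen2 u a h
      have hpath' := S.hpath u a h
      rcases S.nbr h (d := (S.p u a h).length - 2) (by omega) (by omega) hxy
        with he | he
      · have h0 : wAt (S.p u a h) (S.p u a h).length
            = wAt (S.p u a h) ((S.p u a h).length - 2 - 1) := by
          rw [wAt_end]; exact he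
        have := wAt_inj hpath' le_rfl (by omega) h0
        omega
      · have h0 : wAt (S.p u a h) (S.p u a h).length
            = wAt (S.p u a h) ((S.p u a h).length - 2 + 1) := by
          rw [wAt_end]; exact he
        have := wAt_inj hpath' le_rfl (by omega) h0
        omega
    · -- both internal: must be the same path, same position: contradiction
      have hlen := S.hlen2 u a h
      have hlen' := S.hlen2 u' a h'
      have hnx : wAt (S.p u a h) ((S.p u a h).length - 2) ∉ Set.range S.f :=
        S.not_range_wAt h (by omega) (by omega)
      have hny : wAt (S.p u' a h') ((S.p u' a h').length - 2) ∉ Set.range S.f :=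
        S.not_range_wAt h' (by omega) (by omega)
      have he := S.edge_on h hnx (wAt_mem _ (by omega)) hxy
      have hym2 : wAt (S.p u' a h') ((S.p u' a h').length - 2) ∈ (S.p u a h).support :=
        (S.p u a h).snd_mem_support_of_mem_edges he
      have hkey := S.path_unique h h' hny hym2 (wAt_mem _ (by omega))
      rw [Sym2.eq_iff] at hkey
      rcases hkey with ⟨h1, h2⟩ | ⟨h1, h2⟩
      · subst h1
        exact hxy.ne rfl
      · rw [h1] at hg
        exact absurd hg (lt_irrefl _)

/-- two distinct earlier `U`-vertices at a time of offset `o ≥ 2` cannot be adjacent -/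
lemma inc2 (S : SubD F H) {a : α} {x y : β} {o : ℕ} (ho2 : 2 ≤ o) (hoC : o < C β)
    (hxy : H.Adj x y)
    (hx : S.t x < S.g a * C β + o) (hy : S.t y < S.g a * C β + o)
    (hxm : ∃ m, S.t m = S.g a * C β + o ∧ H.Adj x m)
    (hym : ∃ m', S.t m' = S.g a * C β + o ∧ H.Adj y m') : False := by
  obtain ⟨m, hm, hxm'⟩ := hxm
  obtain ⟨m', hm', hym'⟩ := hym
  obtain ⟨v, h, hg, hole, rfl⟩ := S.nbr2_shape ho2 hoC hm hxm' hx
  obtain ⟨v', h', hg', hole', rfl⟩ := S.nbr2_shape ho2 hoC hm' hym' hy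
  have hlen := S.hlen2 a v h
  have hlen' := S.hlen2 a v' h'
  have hnx : wAt (S.p a v h) (o - 1) ∉ Set.range S.f :=
    S.not_range_wAt h (by omega) (by omega)
  have hny : wAt (S.p a v' h') (o - 1) ∉ Set.range S.f :=
    S.not_range_wAt h' (by omega) (by omega)
  have he := S.edge_on h hnx (wAt_mem _ (by omega)) hxy
  have hym2 : wAt (S.p a v' h') (o - 1) ∈ (S.p a v h).support :=
    (S.p a v h).snd_mem_support_of_mem_edges he
  have hkey := S.path_unique h h' hny hym2 (wAt_mem _ (by omega))
  rw [Sym2.eq_iff] at hkey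
  rcases hkey with ⟨h1, h2⟩ | ⟨h1, h2⟩
  · subst h2
    exact hxy.ne rfl
  · rw [← h1] at hg'
    exact absurd hg' (lt_irrefl _)

lemma class1_not_range (S : SubD F H) {a : α} {w : β} (hw : S.t w = S.g a * C β + 1) :
    w ∉ Set.range S.f := by
  obtain ⟨u, v, h, hg, hcase⟩ := S.class1 hw
  have hlen := S.hlen2 u v h
  rcases hcase with ⟨-, h3, rfl⟩ | ⟨-, rfl⟩
  · exact S.not_range_wAt h (by omega) (by omega)
  · exact S.not_range_wAt h (by omega) (by omega)

lemma class2_not_range (S : SubD F H) {a : α} {w : β} {o : ℕ} (ho2 : 2 ≤ o)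
    (hoC : o < C β) (hw : S.t w = S.g a * C β + o) : w ∉ Set.range S.f := by
  obtain ⟨v, h, hg, hole, rfl⟩ := S.class2 ho2 hoC hw
  exact S.not_range_wAt h (by omega) (by omega)

lemma ncard_nbhd (S : SubD F H) [DecidableRel H.Adj] (x : β) :
    (H.neighborSet x).ncard = H.degree x := by
  rw [Set.ncard_eq_toFinset_card', Set.toFinset_card]
  exact H.card_neighborSet_eq_degree x

lemma mem_obdU_iff (S : SubD F H) {ℓ : ℕ} (hℓ : ∀ w, S.t w < ℓ) (i : Fin ℓ) (u : β) :
    u ∈ obdU H (fun j : Fin ℓ => {w | S.t w = (j : ℕ)}) i ↔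
      (∃ v, S.t v = (i : ℕ) ∧ H.Adj u v) ∧ S.t u < (i : ℕ) := by
  unfold obdU
  simp only [Set.mem_setOf_eq]
  constructor
  · rintro ⟨⟨v, hv, ha⟩, ⟨k, hk, hu⟩⟩
    rw [Fin.lt_def] at hk
    exact ⟨⟨v, hv, ha⟩, by omega⟩
  · rintro ⟨hv, hu⟩
    exact ⟨hv, ⟨⟨S.t u, lt_trans hu i.isLt⟩, by rw [Fin.lt_def]; exact hu, rfl⟩⟩

lemma width0 (S : SubD F H) [DecidableRel H.Adj] {ℓ : ℕ} (hℓ : ∀ w, S.t w < ℓ)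
    (i : Fin ℓ) (a : α) (hi : (i : ℕ) = S.g a * C β) :
    (obdEdges H (fun j : Fin ℓ => {w | S.t w = (j : ℕ)}) i).ncard ≤ 2 * H.maxDegree := by
  have hsub : obdEdges H (fun j : Fin ℓ => {w | S.t w = (j : ℕ)}) i ⊆
      (fun z => s(S.f a, z)) '' (H.neighborSet (S.f a)) := by
    intro e
    induction e using Sym2.ind with
    | _ x y =>
      intro he
      obtain ⟨hedge, hmem⟩ := he
      have hadj : H.Adj x y := (H.mem_edgeSet).mp hedge
      have hx := hmem x (Sym2.mem_mk_left x y)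
      have hy := hmem y (Sym2.mem_mk_right x y)
      have key : ∀ z, z ∈ obdU H (fun j : Fin ℓ => {w | S.t w = (j : ℕ)}) i ∪
          {w | S.t w = (i : ℕ)} → z = S.f a ∨ (H.Adj z (S.f a) ∧ S.t z < (i : ℕ)) := by
        intro z hz
        rcases hz with hz | hz
        · rw [S.mem_obdU_iff hℓ] at hz
          obtain ⟨⟨v', hv', ha'⟩, hlt⟩ := hz
          have hv'' : v' = S.f a := S.class0 (by rw [hv', hi])
          exact Or.inr ⟨hv'' ▸ ha', hlt⟩
        · exact Or.inl (S.class0 (by rw [Set.mem_setOf_eq] at hz; rw [hz, hi]))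
      rcases key x hx with rfl | ⟨hxa, hxlt⟩
      · exact ⟨y, hadj, rfl⟩
      · rcases key y hy with rfl | ⟨hya, hylt⟩
        · exact ⟨x, hadj.symm, Sym2.eq_swap⟩
        · exact absurd hadj (S.tfb a hxa.symm hya.symm)
  calc (obdEdges H (fun j : Fin ℓ => {w | S.t w = (j : ℕ)}) i).ncard
      ≤ ((fun z => s(S.f a, z)) '' (H.neighborSet (S.f a))).ncard :=
        Set.ncard_le_ncard hsub (Set.toFinite _)
    _ ≤ (H.neighborSet (S.f a)).ncard := Set.ncard_image_le (Set.toFinite _)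
    _ = H.degree (S.f a) := S.ncard_nbhd _
    _ ≤ 2 * H.maxDegree := by
        have := H.degree_le_maxDegree (S.f a)
        omega

lemma cover12 (S : SubD F H) [DecidableRel H.Adj] {ℓ : ℕ} (hℓ : ∀ w, S.t w < ℓ)
    (i : Fin ℓ)
    (hnr : ∀ w, S.t w = (i : ℕ) → w ∉ Set.range S.f)
    (hUadj : ∀ x y : β, H.Adj x y → S.t x < (i : ℕ) → S.t y < (i : ℕ) →
      (∃ m, S.t m = (i : ℕ) ∧ H.Adj x m) → (∃ m', S.t m' = (i : ℕ) ∧ H.Adj y m') → False) :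
    obdEdges H (fun j : Fin ℓ => {w | S.t w = (j : ℕ)}) i ⊆
      ((fun m => s(m, S.nbrL m)) '' {w | S.t w = (i : ℕ)}) ∪
        ((fun m => s(m, S.nbrR m)) '' {w | S.t w = (i : ℕ)}) := by
  intro e
  induction e using Sym2.ind with
  | _ x y =>
    intro he
    obtain ⟨hedge, hmem⟩ := he
    have hadj : H.Adj x y := (H.mem_edgeSet).mp hedge
    have hx := hmem x (Sym2.mem_mk_left x y)
    have hy := hmem y (Sym2.mem_mk_right x y)
    by_cases hxi : S.t x = (i : ℕ)
    · rcases S.nbr_chosen (hnr x hxi) hadj with rfl | rfl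
      · exact Or.inl ⟨x, hxi, rfl⟩
      · exact Or.inr ⟨x, hxi, rfl⟩
    · by_cases hyi : S.t y = (i : ℕ)
      · rcases S.nbr_chosen (hnr y hyi) hadj.symm with rfl | rfl
        · exact Or.inl ⟨y, hyi, Sym2.eq_swap⟩
        · exact Or.inr ⟨y, hyi, Sym2.eq_swap⟩
      · exfalso
        have hxU : x ∈ obdU H (fun j : Fin ℓ => {w | S.t w = (j : ℕ)}) i := by
          rcases hx with h' | h'
          · exact h'
          · exact absurd h' hxi
        have hyU : y ∈ obdU H (fun j : Fin ℓ => {w | S.t w = (j : ℕ)}) i := by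
          rcases hy with h' | h'
          · exact h'
          · exact absurd h' hyi
        rw [S.mem_obdU_iff hℓ] at hxU hyU
        exact hUadj x y hadj hxU.2 hyU.2 hxU.1 hyU.1

lemma count12 (S : SubD F H) [DecidableRel H.Adj] {ℓ : ℕ} (i : Fin ℓ) (a : α)
    (hcov : obdEdges H (fun j : Fin ℓ => {w | S.t w = (j : ℕ)}) i ⊆
      ((fun m => s(m, S.nbrL m)) '' {w | S.t w = (i : ℕ)}) ∪
        ((fun m => s(m, S.nbrR m)) '' {w | S.t w = (i : ℕ)}))
    (hP : {w | S.t w = (i : ℕ)}.ncard ≤ H.degree (S.f a)) :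
    (obdEdges H (fun j : Fin ℓ => {w | S.t w = (j : ℕ)}) i).ncard ≤ 2 * H.maxDegree := by
  have h1 := Set.ncard_le_ncard hcov (Set.toFinite _)
  have h2 := Set.ncard_union_le ((fun m => s(m, S.nbrL m)) '' {w | S.t w = (i : ℕ)})
    ((fun m => s(m, S.nbrR m)) '' {w | S.t w = (i : ℕ)})
  have h3 : ((fun m => s(m, S.nbrL m)) '' {w | S.t w = (i : ℕ)}).ncard
      ≤ {w | S.t w = (i : ℕ)}.ncard := Set.ncard_image_le (Set.toFinite _)
  have h4 : ((fun m => s(m, S.nbrR m)) '' {w | S.t w = (i : ℕ)}).ncard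
      ≤ {w | S.t w = (i : ℕ)}.ncard := Set.ncard_image_le (Set.toFinite _)
  have h5 := H.degree_le_maxDegree (S.f a)
  omega

lemma width1 (S : SubD F H) [DecidableRel H.Adj] {ℓ : ℕ} (hℓ : ∀ w, S.t w < ℓ)
    (i : Fin ℓ) (a : α) (hi : (i : ℕ) = S.g a * C β + 1) :
    (obdEdges H (fun j : Fin ℓ => {w | S.t w = (j : ℕ)}) i).ncard ≤ 2 * H.maxDegree := by
  refine S.count12 i a (S.cover12 hℓ i ?_ ?_) ?_
  · intro w hw
    exact S.class1_not_range (a := a) (by rw [hw, hi])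
  · intro x y hadj hx hy hxm hym
    rw [hi] at hx hy hxm hym
    exact S.inc1 hadj hx hy hxm hym
  · have hsub : {w | S.t w = (i : ℕ)} ⊆ H.neighborSet (S.f a) := by
      intro w hw
      exact S.class1_adj (by rw [← hi]; exact hw)
    have := Set.ncard_le_ncard hsub (Set.toFinite _)
    rw [S.ncard_nbhd] at this
    exact this

lemma width2 (S : SubD F H) [DecidableRel H.Adj] {ℓ : ℕ} (hℓ : ∀ w, S.t w < ℓ)
    (i : Fin ℓ) (a : α) (o : ℕ) (ho2 : 2 ≤ o) (hoC : o < C β)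
    (hi : (i : ℕ) = S.g a * C β + o) :
    (obdEdges H (fun j : Fin ℓ => {w | S.t w = (j : ℕ)}) i).ncard ≤ 2 * H.maxDegree := by
  refine S.count12 i a (S.cover12 hℓ i ?_ ?_) ?_
  · intro w hw
    exact S.class2_not_range (a := a) ho2 hoC (by rw [hw, hi])
  · intro x y hadj hx hy hxm hym
    rw [hi] at hx hy hxm hym
    exact S.inc2 ho2 hoC hadj hx hy hxm hym
  · have hmaps : ∀ m ∈ {w | S.t w = (i : ℕ)}, S.psiV m ∈ H.neighborSet (S.f a) := by
      intro m hm
      obtain ⟨v, h, hg, hole, rfl⟩ := S.class2 ho2 hoC (by rw [← hi]; exact hm)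
      have hlen := S.hlen2 a v h
      rw [S.psi_spec hg (by omega) hole]
      have hadj := wAt_adj (S.p a v h) (d := 0) (by omega)
      rw [wAt_zero] at hadj
      exact hadj
    have hinj : Set.InjOn S.psiV {w | S.t w = (i : ℕ)} := by
      intro m1 h1 m2 h2 heq
      obtain ⟨v, h, hg, hole, rfl⟩ := S.class2 ho2 hoC (by rw [← hi]; exact h1)
      obtain ⟨v', h', hg', hole', rfl⟩ := S.class2 ho2 hoC (by rw [← hi]; exact h2)
      have hlen := S.hlen2 a v h
      have hlen' := S.hlen2 a v' h'
      rw [S.psi_spec hg (by omega) (by omega), S.psi_spec hg' (by omega) (by omega)] at heq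
      have hn1 : wAt (S.p a v h) 1 ∉ Set.range S.f :=
        S.not_range_wAt h (by omega) (by omega)
      have hm1 : wAt (S.p a v h) 1 ∈ (S.p a v' h').support := by
        rw [heq]; exact wAt_mem _ (by omega)
      have hkey := S.path_unique h h' hn1 (wAt_mem _ (by omega)) hm1
      rw [Sym2.eq_iff] at hkey
      rcases hkey with ⟨h1', h2'⟩ | ⟨h1', h2'⟩
      · subst h2'
        rfl
      · rw [← h1'] at hg'
        exact absurd hg' (lt_irrefl _)
    have := Set.ncard_le_ncard_of_injOn S.psiV hmaps hinj (Set.toFinite _)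
    rw [S.ncard_nbhd] at this
    exact this

lemma width_empty (S : SubD F H) [DecidableRel H.Adj] {ℓ : ℕ}
    (i : Fin ℓ) (hni : ¬ ∃ w, S.t w = (i : ℕ)) :
    (obdEdges H (fun j : Fin ℓ => {w | S.t w = (j : ℕ)}) i).ncard ≤ 2 * H.maxDegree := by
  have hempty : obdEdges H (fun j : Fin ℓ => {w | S.t w = (j : ℕ)}) i = ∅ := by
    rw [Set.eq_empty_iff_forall_notMem]
    intro e
    induction e using Sym2.ind with
    | _ x y =>
      intro he
      obtain ⟨hedge, hmem⟩ := he
      have hx := hmem x (Sym2.mem_mk_left x y)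
      rcases hx with hx | hx
      · obtain ⟨⟨v', hv', -⟩, -⟩ := hx
        exact hni ⟨v', hv'⟩
      · exact hni ⟨x, hx⟩
  rw [hempty]
  simp

lemma width_all (S : SubD F H) [DecidableRel H.Adj] {ℓ : ℕ} (hℓ : ∀ w, S.t w < ℓ)
    (i : Fin ℓ) :
    (obdEdges H (fun j : Fin ℓ => {w | S.t w = (j : ℕ)}) i).ncard ≤ 2 * H.maxDegree := by
  by_cases hne : ∃ w, S.t w = (i : ℕ)
  · obtain ⟨w₀, hw₀⟩ := hne
    rcases S.nf w₀ with ⟨a, rfl⟩ | ⟨u, v, h, hg, d, hd1, hd2, rfl⟩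
    · rw [S.t_branch] at hw₀
      exact S.width0 hℓ i a hw₀.symm
    · have hlen := S.hlen2 u v h
      have hLC := S.len_lt_C u v h
      have ht := S.t_int h hg hd1 hd2
      rw [ht] at hw₀
      by_cases hfar : d = (S.p u v h).length - 1 ∧ 3 ≤ (S.p u v h).length
      · rw [if_pos hfar] at hw₀
        exact S.width1 hℓ i v hw₀.symm
      · rw [if_neg hfar] at hw₀
        by_cases hd1' : d = 1
        · subst hd1'
          exact S.width1 hℓ i u hw₀.symm
        · exact S.width2 hℓ i u d (by omega) (by omega) hw₀.symm
  · exact S.width_empty i hne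

end SubD

/-- If `H` is a proper subdivision of a finite simple graph `F` (every edge of `F` is replaced
by a path with at least one internal vertex), then `H` has an ordered bipartite decomposition
of width at most `2 · Δ(H)`. -/
theorem subdivision_obd {α β : Type*} [Fintype β] (F : SimpleGraph α) (H : SimpleGraph β)
    [DecidableRel H.Adj] (hsub : IsProperSubdivision F H) :
    ∃ (ℓ : ℕ) (P : Fin ℓ → Set β),
      IsOBD H P ∧ ∀ i, (obdEdges H P i).ncard ≤ 2 * H.maxDegree := by
  classical
  obtain ⟨f, p, hf, hpath, hlen2, hrev, hbr, hdisj, hcov, hedg⟩ := hsub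
  haveI : Finite α := Finite.of_injective f hf
  obtain ⟨n, ⟨eqv⟩⟩ := Finite.exists_equiv_fin α
  let S : SubD F H :=
    ⟨f, p, fun a => (eqv a : ℕ),
      fun a b hab => eqv.injective (Fin.val_injective hab),
      hf, hpath, hlen2, hrev, hbr, hdisj, hcov, hedg⟩
  have hℓ : ∀ w, S.t w < (∑ w : β, (S.t w + 1)) + 1 := by
    intro w
    have h1 : S.t w + 1 ≤ ∑ w : β, (S.t w + 1) :=
      Finset.single_le_sum (f := fun w => S.t w + 1)
        (fun _ _ => Nat.zero_le _) (Finset.mem_univ w)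
    omega
  refine ⟨(∑ w : β, (S.t w + 1)) + 1, fun j => {w | S.t w = (j : ℕ)},
    ⟨?_, ?_, ?_⟩, fun i => S.width_all hℓ i⟩
  · intro v
    refine ⟨⟨S.t v, hℓ v⟩, rfl, ?_⟩
    intro j hj
    have hj' : S.t v = (j : ℕ) := hj
    exact Fin.val_injective hj'.symm
  · intro i u hu v hv hadj
    have hu' : S.t u = (i : ℕ) := hu
    have hv' : S.t v = (i : ℕ) := hv
    exact absurd (hu'.trans hv'.symm) (S.adj_t_ne hadj)
  · intro i v hv
    have hv' : S.t v = (i : ℕ) := hv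
    by_cases hex : ∃ z, H.Adj v z ∧ ¬ S.t z < S.t v
    · obtain ⟨z₀, hz₀, hz₀'⟩ := hex
      refine ⟨⟨S.t z₀, hℓ z₀⟩, ?_⟩
      intro u hu
      by_cases hlt : S.t u < S.t v
      · left
        refine ⟨⟨S.t u, hℓ u⟩, ?_, rfl⟩
        rw [Fin.lt_def]
        exact hv' ▸ hlt
      · right
        exact (S.key hz₀ hu hz₀' hlt).symm
    · push_neg at hex
      refine ⟨i, fun u hu => Or.inl ⟨⟨S.t u, hℓ u⟩, ?_, rfl⟩⟩
      rw [Fin.lt_def]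
      exact hv' ▸ (hex u hu)
end

section
/- Let H be a finite simple graph of girth at least 16 that admits a 3-thread partition. Then H has an ordered bipartite decomposition of width at most 2·Δ(H), where Δ(H) is the maximum degree of H. -/
open SimpleGraph

/-- A 3-thread partition of `H`: a partition `X 0, …, X (c-1)` of the vertex set such that,
writing `H⁽ⁱ⁾` for the subgraph of `H` induced by the vertices not in `X 0 ∪ ⋯ ∪ X (i-1)`,
each `X i` is either a single vertex of degree 0 or 1 in `H⁽ⁱ⁾`, or three vertices forming a
3-thread in `H⁽ⁱ⁾` (an induced path on 3 vertices, each of degree 2 in `H⁽ⁱ⁾`). -/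
def IsThreeThreadPartition {V : Type*} (H : SimpleGraph V) {c : ℕ} (X : Fin c → Set V) : Prop :=
  (∀ v : V, ∃! i : Fin c, v ∈ X i) ∧
  ∀ i : Fin c,
    (∃ a : V, X i = {a} ∧
      ({u : V | (∀ j, j < i → u ∉ X j) ∧ H.Adj a u}).ncard ≤ 1) ∨
    (∃ a b d : V, X i = {a, b, d} ∧ a ≠ b ∧ b ≠ d ∧ a ≠ d ∧
      H.Adj a b ∧ H.Adj b d ∧ ¬ H.Adj a d ∧
      ({u : V | (∀ j, j < i → u ∉ X j) ∧ H.Adj a u}).ncard = 2 ∧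
      ({u : V | (∀ j, j < i → u ∉ X j) ∧ H.Adj b u}).ncard = 2 ∧
      ({u : V | (∀ j, j < i → u ∉ X j) ∧ H.Adj d u}).ncard = 2)

section Aux
variable {V : Type*}

lemma no_tri {H : SimpleGraph V} (hg : 16 ≤ H.egirth)
    {x y z : V} (h1 : H.Adj x y) (h2 : H.Adj y z) (h3 : H.Adj z x) : False := by
  have hc : (Walk.cons h1 (Walk.cons h2 (Walk.cons h3 Walk.nil))).IsCycle := by
    rw [Walk.isCycle_def]
    refine ⟨⟨?_⟩, by simp, ?_⟩
    · simp [Sym2.eq_iff, h1.ne, h2.ne, h3.ne]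
      aesop
    · simp [h1.ne, h2.ne, h3.ne, h1.ne', h2.ne', h3.ne']
  have := (le_egirth.mp hg) x _ hc
  simp at this
  exact absurd this (by norm_num)

lemma no_penta {H : SimpleGraph V} (hg : 16 ≤ H.egirth)
    {x1 x2 x3 x4 x5 : V} (h1 : H.Adj x1 x2) (h2 : H.Adj x2 x3) (h3 : H.Adj x3 x4)
    (h4 : H.Adj x4 x5) (h5 : H.Adj x5 x1)
    (n13 : x1 ≠ x3) (n14 : x1 ≠ x4) (n24 : x2 ≠ x4) (n25 : x2 ≠ x5) (n35 : x3 ≠ x5) : False := by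
  have hc : (Walk.cons h1 (Walk.cons h2 (Walk.cons h3 (Walk.cons h4
      (Walk.cons h5 Walk.nil))))).IsCycle := by
    rw [Walk.isCycle_def]
    refine ⟨⟨?_⟩, by simp, ?_⟩
    · simp [Sym2.eq_iff, h1.ne, h2.ne, h3.ne, h4.ne, h5.ne]
      aesop
    · simp [h1.ne, h2.ne, h3.ne, h4.ne, h5.ne, h1.ne', h2.ne', h3.ne', h4.ne', h5.ne']
      aesop
  have := (le_egirth.mp hg) x1 _ hc
  simp at this
  exact absurd this (by norm_num)

/-- A part is *good* if no edge can join two outside vertices both having a neighbour in it. -/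
def GoodPart (H : SimpleGraph V) (S : Set V) : Prop :=
  ∀ u1 u2, H.Adj u1 u2 → u1 ∉ S → u2 ∉ S →
    (∃ v1 ∈ S, H.Adj u1 v1) → (∃ v2 ∈ S, H.Adj u2 v2) → False

lemma goodPart_empty (H : SimpleGraph V) : GoodPart H (∅ : Set V) := by
  rintro u1 u2 _ _ _ ⟨v1, hv1, -⟩ -
  exact hv1

lemma goodPart_singleton {H : SimpleGraph V} (hg : 16 ≤ H.egirth) (a : V) :
    GoodPart H {a} := by
  rintro u1 u2 hadj h1 h2 ⟨v1, hv1, ha1⟩ ⟨v2, hv2, ha2⟩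
  rw [Set.mem_singleton_iff] at hv1 hv2
  rw [hv1] at ha1; rw [hv2] at ha2
  exact no_tri hg hadj ha2 ha1.symm

lemma goodPart_pair {H : SimpleGraph V} (hg : 16 ≤ H.egirth) {a b d : V}
    (had : a ≠ d) (Hab : H.Adj a b) (Hbd : H.Adj b d) :
    GoodPart H {a, d} := by
  rintro u1 u2 hadj h1 h2 ⟨v1, hv1, ha1⟩ ⟨v2, hv2, ha2⟩
  simp only [Set.mem_insert_iff, Set.mem_singleton_iff, not_or] at h1 h2 hv1 hv2
  obtain ⟨h1a, h1d⟩ := h1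
  obtain ⟨h2a, h2d⟩ := h2
  rcases hv1 with h | h <;> rw [h] at ha1 <;> clear h <;>
    rcases hv2 with h | h <;> rw [h] at ha2 <;> clear h
  · exact no_tri hg hadj ha2 ha1.symm
  · -- u1 ~ a, u2 ~ d
    by_cases hb1 : u1 = b
    · rw [hb1] at hadj; exact no_tri hg hadj ha2 Hbd.symm
    by_cases hb2 : u2 = b
    · rw [hb2] at hadj; exact no_tri hg Hab hadj.symm ha1
    · exact no_penta hg Hab.symm ha1.symm hadj ha2 Hbd.symm
        (Ne.symm hb1) (Ne.symm hb2) (fun h => h2a h.symm) had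
        h1d
  · -- u1 ~ d, u2 ~ a
    by_cases hb1 : u1 = b
    · rw [hb1] at hadj; exact no_tri hg hadj ha2 Hab
    by_cases hb2 : u2 = b
    · rw [hb2] at hadj; exact no_tri hg hadj Hbd ha1.symm
    · exact no_penta hg Hbd ha1.symm hadj ha2 Hab
        (Ne.symm hb1) (Ne.symm hb2) (fun h => h2d h.symm) (Ne.symm had)
        h1a
  · exact no_tri hg hadj ha2 ha1.symm

lemma width_of_goodPart [Fintype V] (H : SimpleGraph V) [DecidableRel H.Adj]
    {ℓ : ℕ} (P : Fin ℓ → Set V) (k : Fin ℓ)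
    (hgood : GoodPart H (P k)) (hcard : (P k).ncard ≤ 2) :
    (obdEdges H P k).ncard ≤ 2 * H.maxDegree := by
  classical
  have hend : ∀ e ∈ obdEdges H P k, ∃ x ∈ e, x ∈ P k := by
    intro e he
    induction e using Sym2.ind with
    | _ x y =>
      obtain ⟨hadj, hmem⟩ := he
      rw [mem_edgeSet] at hadj
      by_cases hx : x ∈ P k
      · exact ⟨x, by simp, hx⟩
      by_cases hy : y ∈ P k
      · exact ⟨y, by simp, hy⟩
      exfalso
      have hxU : x ∈ obdU H P k := by
        have := hmem x (by simp)
        rcases this with h | h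
        · exact h
        · exact absurd h hx
      have hyU : y ∈ obdU H P k := by
        have := hmem y (by simp)
        rcases this with h | h
        · exact h
        · exact absurd h hy
      obtain ⟨⟨v1, hv1, ha1⟩, -⟩ := hxU
      obtain ⟨⟨v2, hv2, ha2⟩, -⟩ := hyU
      exact hgood x y hadj hx hy ⟨v1, hv1, ha1⟩ ⟨v2, hv2, ha2⟩
  have hdeg : ∀ v : V, (H.incidenceSet v).ncard = H.degree v := by
    intro v
    rw [Set.ncard_eq_toFinset_card', Set.toFinset_card]
    exact H.card_incidenceSet_eq_degree v
  have hfin : ∀ v : V, (H.incidenceSet v).Finite := fun v => Set.toFinite _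
  interval_cases h : (P k).ncard
  · rw [Set.ncard_eq_zero (Set.toFinite _)] at h
    have he : obdEdges H P k = ∅ := by
      ext e
      simp only [Set.mem_empty_iff_false, iff_false]
      intro he
      obtain ⟨x, -, hx⟩ := hend e he
      rw [h] at hx
      exact hx
    simp [he]
  · rw [Set.ncard_eq_one] at h
    obtain ⟨v, hv⟩ := h
    have hsub : obdEdges H P k ⊆ H.incidenceSet v := by
      intro e he
      obtain ⟨x, hxe, hx⟩ := hend e he
      rw [hv, Set.mem_singleton_iff] at hx
      rw [hx] at hxe
      exact ⟨he.1, hxe⟩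
    calc (obdEdges H P k).ncard ≤ (H.incidenceSet v).ncard :=
          Set.ncard_le_ncard hsub (hfin v)
      _ = H.degree v := hdeg v
      _ ≤ H.maxDegree := H.degree_le_maxDegree v
      _ ≤ 2 * H.maxDegree := by omega
  · rw [Set.ncard_eq_two] at h
    obtain ⟨v, w, hvw, hS⟩ := h
    have hsub : obdEdges H P k ⊆ H.incidenceSet v ∪ H.incidenceSet w := by
      intro e he
      obtain ⟨x, hxe, hx⟩ := hend e he
      rw [hS] at hx
      rcases hx with rfl | rfl
      · exact Or.inl ⟨he.1, hxe⟩
      · exact Or.inr ⟨he.1, hxe⟩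
    calc (obdEdges H P k).ncard ≤ (H.incidenceSet v ∪ H.incidenceSet w).ncard :=
          Set.ncard_le_ncard hsub ((hfin v).union (hfin w))
      _ ≤ (H.incidenceSet v).ncard + (H.incidenceSet w).ncard := Set.ncard_union_le _ _
      _ = H.degree v + H.degree w := by rw [hdeg, hdeg]
      _ ≤ 2 * H.maxDegree := by
          have := H.degree_le_maxDegree v
          have := H.degree_le_maxDegree w
          omega

/-- Interleave two sequences of parts. -/
def interleave {V : Type*} {c : ℕ} (B A : Fin c → Set V) : Fin (2 * c) → Set V :=
  fun k => if k.val % 2 = 0 then B ⟨k.val / 2, by have := k.isLt; omega⟩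
    else A ⟨k.val / 2, by have := k.isLt; omega⟩

lemma interleave_applyB {V : Type*} {c : ℕ} (B A : Fin c → Set V) (i : Fin c)
    (h : 2 * i.val < 2 * c) : interleave B A ⟨2 * i.val, h⟩ = B i := by
  unfold interleave
  rw [if_pos (show 2 * i.val % 2 = 0 by omega)]
  exact congrArg B (Fin.ext (show 2 * i.val / 2 = i.val by omega))

lemma interleave_applyA {V : Type*} {c : ℕ} (B A : Fin c → Set V) (i : Fin c)
    (h : 2 * i.val + 1 < 2 * c) : interleave B A ⟨2 * i.val + 1, h⟩ = A i := by
  unfold interleave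
  rw [if_neg (show ¬ (2 * i.val + 1) % 2 = 0 by omega)]
  exact congrArg A (Fin.ext (show (2 * i.val + 1) / 2 = i.val by omega))

lemma fin_two_mul_split {c : ℕ} (k : Fin (2 * c)) :
    (∃ (i : Fin c) (h : 2 * i.val < 2 * c), k = ⟨2 * i.val, h⟩) ∨
    (∃ (i : Fin c) (h : 2 * i.val + 1 < 2 * c), k = ⟨2 * i.val + 1, h⟩) := by
  have hk := k.isLt
  by_cases h : k.val % 2 = 0
  · exact Or.inl ⟨⟨k.val / 2, by omega⟩, show 2 * (k.val / 2) < 2 * c by omega,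
      Fin.ext (show k.val = 2 * (k.val / 2) by omega)⟩
  · exact Or.inr ⟨⟨k.val / 2, by omega⟩, show 2 * (k.val / 2) + 1 < 2 * c by omega,
      Fin.ext (show k.val = 2 * (k.val / 2) + 1 by omega)⟩

end Aux

/-- A finite simple graph of girth at least 16 admitting a 3-thread partition has an ordered
bipartite decomposition of width at most `2 · Δ(H)`. -/
theorem threadPartition_obd {V : Type*} [Fintype V] (H : SimpleGraph V) [DecidableRel H.Adj]
    (hgirth : 16 ≤ H.egirth) {c : ℕ} (X : Fin c → Set V)
    (hX : IsThreeThreadPartition H X) :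
    ∃ (ℓ : ℕ) (P : Fin ℓ → Set V),
      IsOBD H P ∧ ∀ i, (obdEdges H P i).ncard ≤ 2 * H.maxDegree := by
  classical
  obtain ⟨hpart, hcase⟩ := hX
  -- extract the two-layer structure from each thread part
  have key : ∀ i : Fin c, ∃ B A : Set V,
      (B ∪ A = X i) ∧ (∀ v ∈ B, v ∉ A) ∧
      (∀ u ∈ B, ∀ v ∈ B, ¬ H.Adj u v) ∧ (∀ u ∈ A, ∀ v ∈ A, ¬ H.Adj u v) ∧
      (∀ v ∈ B, ∀ u, H.Adj v u → (∀ j, j < i → u ∉ X j) → u ∈ A) ∧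
      (∀ v ∈ A, ∃ w : V, ∀ u, H.Adj v u → (∀ j, j < i → u ∉ X j) → u ∈ B ∨ u = w) ∧
      GoodPart H B ∧ GoodPart H A ∧ B.ncard ≤ 2 ∧ A.ncard ≤ 2 := by
    intro i
    have hfreshX : ∀ x, x ∈ X i → ∀ j, j < i → x ∉ X j := by
      intro x hx j hj hxj
      exact absurd (((hpart x).unique hxj hx)) (by intro h; rw [h] at hj; exact lt_irrefl _ hj)
    rcases hcase i with ⟨a, hXi, hdeg⟩ | ⟨a, b, d, hXi, hab, hbd, had, Hab, Hbd, Had, hna, hnb, hnd⟩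
    · -- singleton
      refine ⟨∅, {a}, by simp [hXi], by simp, by simp, ?_, by simp, ?_, goodPart_empty H,
        goodPart_singleton hgirth a, by simp, by simp⟩
      · rintro u hu v hv
        rw [Set.mem_singleton_iff] at hu hv
        rw [hu, hv]
        exact H.irrefl
      · rintro v hv
        rw [Set.mem_singleton_iff] at hv
        subst hv
        set S : Set V := {u : V | (∀ j, j < i → u ∉ X j) ∧ H.Adj v u} with hSdef
        by_cases hS : S.Nonempty
        · obtain ⟨w, hw⟩ := hS
          refine ⟨w, fun u hadj hfr => Or.inr ?_⟩
          have hu : u ∈ S := ⟨hfr, hadj⟩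
          exact (Set.ncard_le_one (Set.toFinite _)).mp hdeg u hu w hw
        · refine ⟨v, fun u hadj hfr => absurd ⟨u, ⟨hfr, hadj⟩⟩ hS⟩
    · -- thread a - b - d
      have hfa : ∀ j, j < i → a ∉ X j := hfreshX a (by rw [hXi]; simp)
      have hfb : ∀ j, j < i → b ∉ X j := hfreshX b (by rw [hXi]; simp)
      have hfd : ∀ j, j < i → d ∉ X j := hfreshX d (by rw [hXi]; simp)
      refine ⟨{b}, {a, d}, ?_, ?_, ?_, ?_, ?_, ?_, goodPart_singleton hgirth b,
        goodPart_pair hgirth had Hab Hbd, by simp, ?_⟩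
      · rw [hXi]; ext x; simp; tauto
      · intro v hv
        rw [Set.mem_singleton_iff] at hv
        rw [hv]
        simp only [Set.mem_insert_iff, Set.mem_singleton_iff, not_or]
        exact ⟨fun h => hab h.symm, hbd⟩
      · rintro u hu v hv
        rw [Set.mem_singleton_iff] at hu hv
        rw [hu, hv]; exact H.irrefl
      · intro u hu v hv
        simp only [Set.mem_insert_iff, Set.mem_singleton_iff] at hu hv
        rcases hu with h1 | h1 <;> rcases hv with h2 | h2 <;> rw [h1, h2] <;>
          first
          | exact H.irrefl
          | exact Had
          | exact fun h => Had h.symm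
      · -- forward neighbours of b are exactly {a, d}
        intro v hv u hadj hfr
        rw [Set.mem_singleton_iff] at hv
        rw [hv] at hadj
        have hsub : ({a, d} : Set V) ⊆ {u : V | (∀ j, j < i → u ∉ X j) ∧ H.Adj b u} := by
          rintro x hx
          simp only [Set.mem_insert_iff, Set.mem_singleton_iff] at hx
          rcases hx with rfl | rfl
          · exact ⟨hfa, Hab.symm⟩
          · exact ⟨hfd, Hbd⟩
        have heq : ({a, d} : Set V) = {u : V | (∀ j, j < i → u ∉ X j) ∧ H.Adj b u} := by
          apply Set.eq_of_subset_of_ncard_le hsub _ (Set.toFinite _)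
          rw [hnb, Set.ncard_pair had]
        have : u ∈ ({a, d} : Set V) := by rw [heq]; exact ⟨hfr, hadj⟩
        exact this
      · -- forward neighbours of a (resp. d) are b and one extra vertex
        intro v hv
        simp only [Set.mem_insert_iff, Set.mem_singleton_iff] at hv
        rcases hv with rfl | rfl
        · -- v = a
          have hbS : b ∈ {u : V | (∀ j, j < i → u ∉ X j) ∧ H.Adj v u} := ⟨hfb, Hab⟩
          obtain ⟨x, y, hxy, hS⟩ := Set.ncard_eq_two.mp hna
          rw [hS, Set.mem_insert_iff, Set.mem_singleton_iff] at hbS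
          rcases hbS with rfl | rfl
          · refine ⟨y, fun u hadj hfr => ?_⟩
            have : u ∈ ({b, y} : Set V) := by rw [← hS]; exact ⟨hfr, hadj⟩
            simpa using this
          · refine ⟨x, fun u hadj hfr => ?_⟩
            have : u ∈ ({x, b} : Set V) := by rw [← hS]; exact ⟨hfr, hadj⟩
            simp only [Set.mem_insert_iff, Set.mem_singleton_iff] at this
            tauto
        · -- v = d
          have hbS : b ∈ {u : V | (∀ j, j < i → u ∉ X j) ∧ H.Adj v u} := ⟨hfb, Hbd.symm⟩
          obtain ⟨x, y, hxy, hS⟩ := Set.ncard_eq_two.mp hnd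
          rw [hS, Set.mem_insert_iff, Set.mem_singleton_iff] at hbS
          rcases hbS with rfl | rfl
          · refine ⟨y, fun u hadj hfr => ?_⟩
            have : u ∈ ({b, y} : Set V) := by rw [← hS]; exact ⟨hfr, hadj⟩
            simpa using this
          · refine ⟨x, fun u hadj hfr => ?_⟩
            have : u ∈ ({x, b} : Set V) := by rw [← hS]; exact ⟨hfr, hadj⟩
            simp only [Set.mem_insert_iff, Set.mem_singleton_iff] at this
            tauto
      · rw [Set.ncard_pair had]
  choose B A hunion hdisj hindB hindA hfwdB hfwdA hgoodB hgoodA hcardB hcardA using key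
  have huniqX : ∀ (v : V) (i j : Fin c), v ∈ X i → v ∈ X j → i = j :=
    fun v i j hi hj => (hpart v).unique hi hj
  have hBX : ∀ (i : Fin c) (v : V), v ∈ B i → v ∈ X i := by
    intro i v h; rw [← hunion i]; exact Or.inl h
  have hAX : ∀ (i : Fin c) (v : V), v ∈ A i → v ∈ X i := by
    intro i v h; rw [← hunion i]; exact Or.inr h
  refine ⟨2 * c, interleave B A, ⟨?_, ?_, ?_⟩, ?_⟩
  · -- partition
    intro v
    obtain ⟨i, hi, -⟩ := hpart v
    have hBA : v ∈ B i ∪ A i := by rw [hunion i]; exact hi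
    have key2 : ∀ k : Fin (2 * c), v ∈ interleave B A k →
        (∃ h, k = (⟨2 * i.val, h⟩ : Fin (2 * c)) ∧ v ∈ B i) ∨
        (∃ h, k = (⟨2 * i.val + 1, h⟩ : Fin (2 * c)) ∧ v ∈ A i) := by
      intro k hk
      rcases fin_two_mul_split k with ⟨i', h', rfl⟩ | ⟨i', h', rfl⟩
      · rw [interleave_applyB] at hk
        have : i' = i := huniqX v i' i (hBX i' v hk) hi
        subst this
        exact Or.inl ⟨h', rfl, hk⟩
      · rw [interleave_applyA] at hk
        have : i' = i := huniqX v i' i (hAX i' v hk) hi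
        subst this
        exact Or.inr ⟨h', rfl, hk⟩
    rcases hBA with hB | hA
    · have hb : 2 * i.val < 2 * c := by have := i.isLt; omega
      refine ⟨⟨2 * i.val, hb⟩, by show v ∈ interleave B A _; rw [interleave_applyB]; exact hB, ?_⟩
      intro k hk
      rcases key2 k hk with ⟨h, rfl, -⟩ | ⟨h, rfl, hA⟩
      · rfl
      · exact absurd hA (hdisj i v hB)
    · have hb : 2 * i.val + 1 < 2 * c := by have := i.isLt; omega
      refine ⟨⟨2 * i.val + 1, hb⟩, by show v ∈ interleave B A _; rw [interleave_applyA]; exact hA, ?_⟩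
      intro k hk
      rcases key2 k hk with ⟨h, rfl, hB⟩ | ⟨h, rfl, -⟩
      · exact absurd hA (hdisj i v hB)
      · rfl
  · -- independence
    intro k
    rcases fin_two_mul_split k with ⟨i, h, rfl⟩ | ⟨i, h, rfl⟩
    · rw [interleave_applyB]; exact hindB i
    · rw [interleave_applyA]; exact hindA i
  · -- condition (3)
    intro k v hv
    rcases fin_two_mul_split k with ⟨i, h, rfl⟩ | ⟨i, h, rfl⟩
    · -- v in a B-part: forward neighbours all go to the A-part of the same block
      rw [interleave_applyB] at hv
      have hb : 2 * i.val + 1 < 2 * c := by omega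
      refine ⟨⟨2 * i.val + 1, hb⟩, ?_⟩
      intro u hadj
      by_cases hfr : ∀ j, j < i → u ∉ X j
      · right
        rw [interleave_applyA]
        exact hfwdB i v hv u hadj hfr
      · push_neg at hfr
        obtain ⟨j, hj, hu⟩ := hfr
        left
        have hu' : u ∈ B j ∪ A j := by rw [hunion j]; exact hu
        have hjlt : j.val < i.val := hj
        rcases hu' with h1 | h1
        · have hbj : 2 * j.val < 2 * c := by omega
          exact ⟨⟨2 * j.val, hbj⟩, by rw [Fin.mk_lt_mk]; omega,
            by rw [interleave_applyB]; exact h1⟩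
        · have hbj : 2 * j.val + 1 < 2 * c := by omega
          exact ⟨⟨2 * j.val + 1, hbj⟩, by rw [Fin.mk_lt_mk]; omega,
            by rw [interleave_applyA]; exact h1⟩
    · -- v in an A-part
      rw [interleave_applyA] at hv
      obtain ⟨w, hw⟩ := hfwdA i v hv
      -- the part containing w
      obtain ⟨iw, hiw, -⟩ := hpart w
      have hwBA : w ∈ B iw ∪ A iw := by rw [hunion iw]; exact hiw
      have hjdef : ∃ j : Fin (2 * c), w ∈ interleave B A j := by
        rcases hwBA with h1 | h1
        · have hbw : 2 * iw.val < 2 * c := by have := iw.isLt; omega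
          exact ⟨⟨2 * iw.val, hbw⟩, by rw [interleave_applyB]; exact h1⟩
        · have hbw : 2 * iw.val + 1 < 2 * c := by have := iw.isLt; omega
          exact ⟨⟨2 * iw.val + 1, hbw⟩, by rw [interleave_applyA]; exact h1⟩
      obtain ⟨j, hwj⟩ := hjdef
      refine ⟨j, ?_⟩
      intro u hadj
      by_cases hfr : ∀ j', j' < i → u ∉ X j'
      · rcases hw u hadj hfr with h1 | h1
        · left
          have hbi : 2 * i.val < 2 * c := by omega
          exact ⟨⟨2 * i.val, hbi⟩, by rw [Fin.mk_lt_mk]; omega,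
            by rw [interleave_applyB]; exact h1⟩
        · right
          rw [h1]
          exact hwj
      · push_neg at hfr
        obtain ⟨j', hj', hu⟩ := hfr
        left
        have hu' : u ∈ B j' ∪ A j' := by rw [hunion j']; exact hu
        have hjlt : j'.val < i.val := hj'
        rcases hu' with h1 | h1
        · have hbj : 2 * j'.val < 2 * c := by omega
          exact ⟨⟨2 * j'.val, hbj⟩, by rw [Fin.mk_lt_mk]; omega,
            by rw [interleave_applyB]; exact h1⟩
        · have hbj : 2 * j'.val + 1 < 2 * c := by omega
          exact ⟨⟨2 * j'.val + 1, hbj⟩, by rw [Fin.mk_lt_mk]; omega,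
            by rw [interleave_applyA]; exact h1⟩
  · -- width bound
    intro k
    apply width_of_goodPart
    · rcases fin_two_mul_split k with ⟨i, h, rfl⟩ | ⟨i, h, rfl⟩
      · rw [interleave_applyB]; exact hgoodB i
      · rw [interleave_applyA]; exact hgoodA i
    · rcases fin_two_mul_split k with ⟨i, h, rfl⟩ | ⟨i, h, rfl⟩
      · rw [interleave_applyB]; exact hcardB i
      · rw [interleave_applyA]; exact hcardA i
end

section
/- Let k ≥ 2 be an integer, let H_D be a diagonal graph on V = {(i,j) : 0 ≤ i,j ≤ k−1}, and suppose that no connected component of H_D contains both a vertex of the top row and a vertex of the bottom row. Then every vertex of the boundary graph H_B has degree 0, 1, 2, or 4 in H_B; in particular, no vertex of H_B has degree 3. -/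
open SimpleGraph

/-- `H` is a diagonal graph on `{(i,j) : 0 ≤ i,j ≤ k-1}`: for every `(i,j)` with
`0 ≤ i,j ≤ k-2`, exactly one of the two diagonals `{(i,j),(i+1,j+1)}` and
`{(i,j+1),(i+1,j)}` of the corresponding 2×2 square is an edge of `H`, and `H` has no
other edges. -/
def IsDiagonalGraph (k : ℕ) (H : SimpleGraph (Fin k × Fin k)) : Prop :=
  (∀ (i j : ℕ) (hi : i + 1 < k) (hj : j + 1 < k),
    H.Adj (⟨i, by omega⟩, ⟨j, by omega⟩) (⟨i + 1, hi⟩, ⟨j + 1, hj⟩) ↔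
      ¬ H.Adj (⟨i, by omega⟩, ⟨j + 1, hj⟩) (⟨i + 1, hi⟩, ⟨j, by omega⟩)) ∧
  (∀ u v : Fin k × Fin k, H.Adj u v →
    ((u.1 : ℕ) + 1 = (v.1 : ℕ) ∨ (v.1 : ℕ) + 1 = (u.1 : ℕ)) ∧
    ((u.2 : ℕ) + 1 = (v.2 : ℕ) ∨ (v.2 : ℕ) + 1 = (u.2 : ℕ)))

/-- `V_U`: the set of vertices lying in connected components of `H` that contain at least one
vertex of the top row (row `k - 1`). -/
def upperVerts (k : ℕ) (H : SimpleGraph (Fin k × Fin k)) : Set (Fin k × Fin k) :=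
  {v | ∃ u : Fin k × Fin k, (u.2 : ℕ) = k - 1 ∧ H.Reachable v u}

/-- The boundary graph `H_B` of a diagonal graph `H`: its edges are those edges `{a, b}` of
`H` such that `a ∉ V_U`, `b ∉ V_U`, and exactly one of the two other corners `(a.1, b.2)`,
`(b.1, a.2)` of the 2×2 square having `{a, b}` as a diagonal lies in `V_U`. -/
def boundaryGraph (k : ℕ) (H : SimpleGraph (Fin k × Fin k)) :
    SimpleGraph (Fin k × Fin k) where
  Adj a b := H.Adj a b ∧ a ∉ upperVerts k H ∧ b ∉ upperVerts k H ∧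
    ((a.1, b.2) ∈ upperVerts k H ↔ (b.1, a.2) ∉ upperVerts k H)
  symm := by
    constructor
    rintro a b ⟨h1, h2, h3, h4⟩
    exact ⟨h1.symm, h3, h2, by tauto⟩
  loopless := ⟨fun a h => H.irrefl h.1⟩

/-- The degree of a vertex in the boundary graph. -/
noncomputable def boundaryDegree (k : ℕ) (H : SimpleGraph (Fin k × Fin k))
    (v : Fin k × Fin k) : ℕ :=
  {u : Fin k × Fin k | (boundaryGraph k H).Adj v u}.ncard

set_option maxHeartbeats 1000000 in
/-- If no connected component of a diagonal graph `H` contains both a vertex of the top row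
and a vertex of the bottom row, then every vertex of the boundary graph `H_B` has degree
0, 1, 2 or 4; in particular, no vertex of `H_B` has degree 3. -/
theorem boundaryGraph_degrees (k : ℕ) (hk : 2 ≤ k) (H : SimpleGraph (Fin k × Fin k))
    (hH : IsDiagonalGraph k H)
    (hsep : ¬ ∃ u v : Fin k × Fin k,
      (u.2 : ℕ) = k - 1 ∧ (v.2 : ℕ) = 0 ∧ H.Reachable u v) :
    ∀ v : Fin k × Fin k, v ∉ upperVerts k H →
      boundaryDegree k H v ∈ ({0, 1, 2, 4} : Set ℕ) := by
  classical
  clear hsep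
  rintro ⟨⟨a, ha⟩, ⟨b, hb⟩⟩ hv
  have hbk : b + 1 < k := by
    by_contra hcon
    exact hv ⟨((⟨a, ha⟩, ⟨b, hb⟩)), show b = k - 1 by omega, Reachable.refl _⟩
  have hreach : ∀ x y : Fin k × Fin k, H.Adj x y → (x ∈ upperVerts k H ↔ y ∈ upperVerts k H) := by
    intro x y hxy
    constructor
    · rintro ⟨u, hu, hr⟩
      exact ⟨u, hu, hxy.symm.reachable.trans hr⟩
    · rintro ⟨u, hu, hr⟩
      exact ⟨u, hu, hxy.reachable.trans hr⟩
  have hcoord : ∀ u : Fin k × Fin k, (boundaryGraph k H).Adj (⟨a, ha⟩, ⟨b, hb⟩) u →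
      (((u.1 : ℕ) = a + 1 ∨ (u.1 : ℕ) + 1 = a) ∧ ((u.2 : ℕ) = b + 1 ∨ (u.2 : ℕ) + 1 = b)) := by
    intro u hu
    have h1 : a + 1 = (u.1 : ℕ) ∨ (u.1 : ℕ) + 1 = a := (hH.2 _ _ hu.1).1
    have h2 : b + 1 = (u.2 : ℕ) ∨ (u.2 : ℕ) + 1 = b := (hH.2 _ _ hu.1).2
    omega
  have hmem2 : ∀ n : ℕ, n ≤ 2 → n ∈ ({0, 1, 2, 4} : Set ℕ) := by
    intro n hn
    simp only [Set.mem_insert_iff, Set.mem_singleton_iff]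
    omega
  simp only [boundaryDegree]
  by_cases hA : a = 0 ∨ a + 1 = k
  · apply hmem2
    have hinj : Set.InjOn (fun u : Fin k × Fin k => decide ((u.2 : ℕ) = b + 1))
        {u | (boundaryGraph k H).Adj (⟨a, ha⟩, ⟨b, hb⟩) u} := by
      intro u hu u' hu' hff
      obtain ⟨h1, h2⟩ := hcoord u hu
      obtain ⟨h1', h2'⟩ := hcoord u' hu'
      have hif : ((u.2 : ℕ) = b + 1) ↔ ((u'.2 : ℕ) = b + 1) := by
        simpa [decide_eq_decide] using hff
      have hk1 := u.1.isLt
      have hk1' := u'.1.isLt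
      exact Prod.ext_iff.mpr ⟨Fin.val_injective (by omega), Fin.val_injective (by omega)⟩
    have hle := Set.ncard_le_ncard_of_injOn (t := (Set.univ : Set Bool))
      (fun u : Fin k × Fin k => decide ((u.2 : ℕ) = b + 1))
      (fun x _ => Set.mem_univ _) hinj Set.finite_univ
    rwa [Set.ncard_univ, Nat.card_eq_fintype_card, Fintype.card_bool] at hle
  by_cases hB : b = 0
  · apply hmem2
    have hinj : Set.InjOn (fun u : Fin k × Fin k => decide ((u.1 : ℕ) = a + 1))
        {u | (boundaryGraph k H).Adj (⟨a, ha⟩, ⟨b, hb⟩) u} := by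
      intro u hu u' hu' hff
      obtain ⟨h1, h2⟩ := hcoord u hu
      obtain ⟨h1', h2'⟩ := hcoord u' hu'
      have hif : ((u.1 : ℕ) = a + 1) ↔ ((u'.1 : ℕ) = a + 1) := by
        simpa [decide_eq_decide] using hff
      have hk1 := u.1.isLt
      have hk1' := u'.1.isLt
      exact Prod.ext_iff.mpr ⟨Fin.val_injective (by omega), Fin.val_injective (by omega)⟩
    have hle := Set.ncard_le_ncard_of_injOn (t := (Set.univ : Set Bool))
      (fun u : Fin k × Fin k => decide ((u.1 : ℕ) = a + 1))
      (fun x _ => Set.mem_univ _) hinj Set.finite_univ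
    rwa [Set.ncard_univ, Nat.card_eq_fintype_card, Fintype.card_bool] at hle
  push_neg at hA
  obtain ⟨a', rfl⟩ : ∃ a', a = a' + 1 := ⟨a - 1, by omega⟩
  obtain ⟨b', rfl⟩ : ∃ b', b = b' + 1 := ⟨b - 1, by omega⟩
  have haE : a' + 1 + 1 < k := by omega
  have haW : a' < k := by omega
  have hbS : b' < k := by omega
  have key : ∀ u : Fin k × Fin k, (boundaryGraph k H).Adj (⟨a' + 1, ha⟩, ⟨b' + 1, hb⟩) u ↔
      ((u = (⟨a' + 1 + 1, haE⟩, ⟨b' + 1 + 1, hbk⟩) ∧ ((⟨a' + 1, ha⟩, ⟨b' + 1 + 1, hbk⟩) ∈ upperVerts k H ↔ (⟨a' + 1 + 1, haE⟩, ⟨b' + 1, hb⟩) ∉ upperVerts k H)) ∨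
       (u = (⟨a', haW⟩, ⟨b' + 1 + 1, hbk⟩) ∧ ((⟨a' + 1, ha⟩, ⟨b' + 1 + 1, hbk⟩) ∈ upperVerts k H ↔ (⟨a', haW⟩, ⟨b' + 1, hb⟩) ∉ upperVerts k H)) ∨
       (u = (⟨a' + 1 + 1, haE⟩, ⟨b', hbS⟩) ∧ ((⟨a' + 1, ha⟩, ⟨b', hbS⟩) ∈ upperVerts k H ↔ (⟨a' + 1 + 1, haE⟩, ⟨b' + 1, hb⟩) ∉ upperVerts k H)) ∨
       (u = (⟨a', haW⟩, ⟨b', hbS⟩) ∧ ((⟨a' + 1, ha⟩, ⟨b', hbS⟩) ∈ upperVerts k H ↔ (⟨a', haW⟩, ⟨b' + 1, hb⟩) ∉ upperVerts k H))) := by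
    intro u
    constructor
    · intro h
      obtain ⟨h1, h2⟩ := hcoord u h
      have hu4 : u = (⟨a' + 1 + 1, haE⟩, ⟨b' + 1 + 1, hbk⟩) ∨ u = (⟨a', haW⟩, ⟨b' + 1 + 1, hbk⟩) ∨ u = (⟨a' + 1 + 1, haE⟩, ⟨b', hbS⟩) ∨ u = (⟨a', haW⟩, ⟨b', hbS⟩) := by
        rcases h1 with h1 | h1 <;> rcases h2 with h2 | h2
        · exact Or.inl (Prod.ext_iff.mpr
            ⟨Fin.val_injective (show (u.1 : ℕ) = a' + 1 + 1 by omega),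
             Fin.val_injective (show (u.2 : ℕ) = b' + 1 + 1 by omega)⟩)
        · exact Or.inr (Or.inr (Or.inl (Prod.ext_iff.mpr
            ⟨Fin.val_injective (show (u.1 : ℕ) = a' + 1 + 1 by omega),
             Fin.val_injective (show (u.2 : ℕ) = b' by omega)⟩)))
        · exact Or.inr (Or.inl (Prod.ext_iff.mpr
            ⟨Fin.val_injective (show (u.1 : ℕ) = a' by omega),
             Fin.val_injective (show (u.2 : ℕ) = b' + 1 + 1 by omega)⟩))
        · exact Or.inr (Or.inr (Or.inr (Prod.ext_iff.mpr
            ⟨Fin.val_injective (show (u.1 : ℕ) = a' by omega),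
             Fin.val_injective (show (u.2 : ℕ) = b' by omega)⟩)))
      rcases hu4 with rfl | rfl | rfl | rfl
      · exact Or.inl ⟨rfl, h.2.2.2⟩
      · exact Or.inr (Or.inl ⟨rfl, h.2.2.2⟩)
      · exact Or.inr (Or.inr (Or.inl ⟨rfl, h.2.2.2⟩))
      · exact Or.inr (Or.inr (Or.inr ⟨rfl, h.2.2.2⟩))
    · intro h
      rcases h with ⟨rfl, hx⟩ | ⟨rfl, hx⟩ | ⟨rfl, hx⟩ | ⟨rfl, hx⟩
      · have hiff : H.Adj (⟨a' + 1, ha⟩, ⟨b' + 1, hb⟩) (⟨a' + 1 + 1, haE⟩, ⟨b' + 1 + 1, hbk⟩) ↔ ¬ H.Adj (⟨a' + 1, ha⟩, ⟨b' + 1 + 1, hbk⟩) (⟨a' + 1 + 1, haE⟩, ⟨b' + 1, hb⟩) := hH.1 (a' + 1) (b' + 1) haE hbk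
        have hAdj : H.Adj (⟨a' + 1, ha⟩, ⟨b' + 1, hb⟩) (⟨a' + 1 + 1, haE⟩, ⟨b' + 1 + 1, hbk⟩) := by
          apply hiff.mpr
          intro hc
          exact iff_not_self (((hreach _ _ hc).symm).trans hx)
        exact ⟨hAdj, hv, fun hC => hv ((hreach _ _ hAdj).mpr hC), hx⟩
      · have hiff : H.Adj (⟨a', haW⟩, ⟨b' + 1, hb⟩) (⟨a' + 1, ha⟩, ⟨b' + 1 + 1, hbk⟩) ↔ ¬ H.Adj (⟨a', haW⟩, ⟨b' + 1 + 1, hbk⟩) (⟨a' + 1, ha⟩, ⟨b' + 1, hb⟩) := hH.1 a' (b' + 1) ha hbk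
        have hAdj : H.Adj (⟨a' + 1, ha⟩, ⟨b' + 1, hb⟩) (⟨a', haW⟩, ⟨b' + 1 + 1, hbk⟩) := by
          by_contra hB2
          have hWN := hiff.mpr (fun hc => hB2 hc.symm)
          exact iff_not_self ((hreach _ _ hWN).trans hx)
        exact ⟨hAdj, hv, fun hC => hv ((hreach _ _ hAdj).mpr hC), hx⟩
      · have hiff : H.Adj (⟨a' + 1, ha⟩, ⟨b', hbS⟩) (⟨a' + 1 + 1, haE⟩, ⟨b' + 1, hb⟩) ↔ ¬ H.Adj (⟨a' + 1, ha⟩, ⟨b' + 1, hb⟩) (⟨a' + 1 + 1, haE⟩, ⟨b', hbS⟩) := hH.1 (a' + 1) b' haE hb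
        have hAdj : H.Adj (⟨a' + 1, ha⟩, ⟨b' + 1, hb⟩) (⟨a' + 1 + 1, haE⟩, ⟨b', hbS⟩) := by
          by_contra hB2
          have hSE := hiff.mpr hB2
          exact iff_not_self (((hreach _ _ hSE).symm).trans hx)
        exact ⟨hAdj, hv, fun hC => hv ((hreach _ _ hAdj).mpr hC), hx⟩
      · have hiff : H.Adj (⟨a', haW⟩, ⟨b', hbS⟩) (⟨a' + 1, ha⟩, ⟨b' + 1, hb⟩) ↔ ¬ H.Adj (⟨a', haW⟩, ⟨b' + 1, hb⟩) (⟨a' + 1, ha⟩, ⟨b', hbS⟩) := hH.1 a' b' ha hb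
        have hAdj : H.Adj (⟨a' + 1, ha⟩, ⟨b' + 1, hb⟩) (⟨a', haW⟩, ⟨b', hbS⟩) := by
          by_contra hB2
          have hWS : H.Adj (⟨a', haW⟩, ⟨b' + 1, hb⟩) (⟨a' + 1, ha⟩, ⟨b', hbS⟩) := by
            by_contra hWS
            exact hB2 (hiff.mpr hWS).symm
          exact iff_not_self ((hreach _ _ hWS).trans hx)
        exact ⟨hAdj, hv, fun hC => hv ((hreach _ _ hAdj).mpr hC), hx⟩
  have d12 : (⟨a' + 1 + 1, haE⟩, ⟨b' + 1 + 1, hbk⟩) ≠ ((⟨a', haW⟩, ⟨b' + 1 + 1, hbk⟩) : Fin k × Fin k) := by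
    simp only [ne_eq, Prod.mk.injEq, Fin.mk.injEq]; omega
  have d13 : (⟨a' + 1 + 1, haE⟩, ⟨b' + 1 + 1, hbk⟩) ≠ ((⟨a' + 1 + 1, haE⟩, ⟨b', hbS⟩) : Fin k × Fin k) := by
    simp only [ne_eq, Prod.mk.injEq, Fin.mk.injEq]; omega
  have d14 : (⟨a' + 1 + 1, haE⟩, ⟨b' + 1 + 1, hbk⟩) ≠ ((⟨a', haW⟩, ⟨b', hbS⟩) : Fin k × Fin k) := by
    simp only [ne_eq, Prod.mk.injEq, Fin.mk.injEq]; omega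
  have d23 : (⟨a', haW⟩, ⟨b' + 1 + 1, hbk⟩) ≠ ((⟨a' + 1 + 1, haE⟩, ⟨b', hbS⟩) : Fin k × Fin k) := by
    simp only [ne_eq, Prod.mk.injEq, Fin.mk.injEq]; omega
  have d24 : (⟨a', haW⟩, ⟨b' + 1 + 1, hbk⟩) ≠ ((⟨a', haW⟩, ⟨b', hbS⟩) : Fin k × Fin k) := by
    simp only [ne_eq, Prod.mk.injEq, Fin.mk.injEq]; omega
  have d34 : (⟨a' + 1 + 1, haE⟩, ⟨b', hbS⟩) ≠ ((⟨a', haW⟩, ⟨b', hbS⟩) : Fin k × Fin k) := by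
    simp only [ne_eq, Prod.mk.injEq, Fin.mk.injEq]; omega
  have hm1 : (⟨a' + 1 + 1, haE⟩, ⟨b' + 1 + 1, hbk⟩) ∉ ({(⟨a', haW⟩, ⟨b' + 1 + 1, hbk⟩), (⟨a' + 1 + 1, haE⟩, ⟨b', hbS⟩), (⟨a', haW⟩, ⟨b', hbS⟩)} : Set (Fin k × Fin k)) := by
    simp only [Set.mem_insert_iff, Set.mem_singleton_iff]
    push_neg
    exact ⟨d12, d13, d14⟩
  have hm2 : (⟨a', haW⟩, ⟨b' + 1 + 1, hbk⟩) ∉ ({(⟨a' + 1 + 1, haE⟩, ⟨b', hbS⟩), (⟨a', haW⟩, ⟨b', hbS⟩)} : Set (Fin k × Fin k)) := by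
    simp only [Set.mem_insert_iff, Set.mem_singleton_iff]
    push_neg
    exact ⟨d23, d24⟩
  have hquad : ({(⟨a' + 1 + 1, haE⟩, ⟨b' + 1 + 1, hbk⟩), (⟨a', haW⟩, ⟨b' + 1 + 1, hbk⟩), (⟨a' + 1 + 1, haE⟩, ⟨b', hbS⟩), (⟨a', haW⟩, ⟨b', hbS⟩)} : Set (Fin k × Fin k)).ncard = 4 := by
    rw [Set.ncard_insert_of_notMem hm1 (Set.toFinite _),
      Set.ncard_insert_of_notMem hm2 (Set.toFinite _), Set.ncard_pair d34]
  by_cases hn : (⟨a' + 1, ha⟩, ⟨b' + 1 + 1, hbk⟩) ∈ upperVerts k H <;>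
    by_cases he : (⟨a' + 1 + 1, haE⟩, ⟨b' + 1, hb⟩) ∈ upperVerts k H <;>
    by_cases hs : (⟨a' + 1, ha⟩, ⟨b', hbS⟩) ∈ upperVerts k H <;>
    by_cases hw : (⟨a', haW⟩, ⟨b' + 1, hb⟩) ∈ upperVerts k H
  · have hS : {u | (boundaryGraph k H).Adj (⟨a' + 1, ha⟩, ⟨b' + 1, hb⟩) u} = (∅ : Set (Fin k × Fin k)) := by
      ext u
      rw [Set.mem_setOf_eq, key u]
      simp [hn, he, hs, hw]
    rw [hS, Set.ncard_empty]
    simp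
  · have hS : {u | (boundaryGraph k H).Adj (⟨a' + 1, ha⟩, ⟨b' + 1, hb⟩) u} = ({(⟨a', haW⟩, ⟨b' + 1 + 1, hbk⟩), (⟨a', haW⟩, ⟨b', hbS⟩)} : Set (Fin k × Fin k)) := by
      ext u
      rw [Set.mem_setOf_eq, key u]
      simp [hn, he, hs, hw]
    rw [hS, Set.ncard_pair d24]
    simp
  · have hS : {u | (boundaryGraph k H).Adj (⟨a' + 1, ha⟩, ⟨b' + 1, hb⟩) u} = ({(⟨a' + 1 + 1, haE⟩, ⟨b', hbS⟩), (⟨a', haW⟩, ⟨b', hbS⟩)} : Set (Fin k × Fin k)) := by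
      ext u
      rw [Set.mem_setOf_eq, key u]
      simp [hn, he, hs, hw]
    rw [hS, Set.ncard_pair d34]
    simp
  · have hS : {u | (boundaryGraph k H).Adj (⟨a' + 1, ha⟩, ⟨b' + 1, hb⟩) u} = ({(⟨a', haW⟩, ⟨b' + 1 + 1, hbk⟩), (⟨a' + 1 + 1, haE⟩, ⟨b', hbS⟩)} : Set (Fin k × Fin k)) := by
      ext u
      rw [Set.mem_setOf_eq, key u]
      simp [hn, he, hs, hw]
    rw [hS, Set.ncard_pair d23]
    simp
  · have hS : {u | (boundaryGraph k H).Adj (⟨a' + 1, ha⟩, ⟨b' + 1, hb⟩) u} = ({(⟨a' + 1 + 1, haE⟩, ⟨b' + 1 + 1, hbk⟩), (⟨a' + 1 + 1, haE⟩, ⟨b', hbS⟩)} : Set (Fin k × Fin k)) := by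
      ext u
      rw [Set.mem_setOf_eq, key u]
      simp [hn, he, hs, hw]
    rw [hS, Set.ncard_pair d13]
    simp
  · have hS : {u | (boundaryGraph k H).Adj (⟨a' + 1, ha⟩, ⟨b' + 1, hb⟩) u} = ({(⟨a' + 1 + 1, haE⟩, ⟨b' + 1 + 1, hbk⟩), (⟨a', haW⟩, ⟨b' + 1 + 1, hbk⟩), (⟨a' + 1 + 1, haE⟩, ⟨b', hbS⟩), (⟨a', haW⟩, ⟨b', hbS⟩)} : Set (Fin k × Fin k)) := by
      ext u
      rw [Set.mem_setOf_eq, key u]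
      simp [hn, he, hs, hw]
    rw [hS, hquad]
    simp
  · have hS : {u | (boundaryGraph k H).Adj (⟨a' + 1, ha⟩, ⟨b' + 1, hb⟩) u} = ({(⟨a' + 1 + 1, haE⟩, ⟨b' + 1 + 1, hbk⟩), (⟨a', haW⟩, ⟨b', hbS⟩)} : Set (Fin k × Fin k)) := by
      ext u
      rw [Set.mem_setOf_eq, key u]
      simp [hn, he, hs, hw]
    rw [hS, Set.ncard_pair d14]
    simp
  · have hS : {u | (boundaryGraph k H).Adj (⟨a' + 1, ha⟩, ⟨b' + 1, hb⟩) u} = ({(⟨a' + 1 + 1, haE⟩, ⟨b' + 1 + 1, hbk⟩), (⟨a', haW⟩, ⟨b' + 1 + 1, hbk⟩)} : Set (Fin k × Fin k)) := by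
      ext u
      rw [Set.mem_setOf_eq, key u]
      simp [hn, he, hs, hw]
    rw [hS, Set.ncard_pair d12]
    simp
  · have hS : {u | (boundaryGraph k H).Adj (⟨a' + 1, ha⟩, ⟨b' + 1, hb⟩) u} = ({(⟨a' + 1 + 1, haE⟩, ⟨b' + 1 + 1, hbk⟩), (⟨a', haW⟩, ⟨b' + 1 + 1, hbk⟩)} : Set (Fin k × Fin k)) := by
      ext u
      rw [Set.mem_setOf_eq, key u]
      simp [hn, he, hs, hw]
    rw [hS, Set.ncard_pair d12]
    simp
  · have hS : {u | (boundaryGraph k H).Adj (⟨a' + 1, ha⟩, ⟨b' + 1, hb⟩) u} = ({(⟨a' + 1 + 1, haE⟩, ⟨b' + 1 + 1, hbk⟩), (⟨a', haW⟩, ⟨b', hbS⟩)} : Set (Fin k × Fin k)) := by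
      ext u
      rw [Set.mem_setOf_eq, key u]
      simp [hn, he, hs, hw]
    rw [hS, Set.ncard_pair d14]
    simp
  · have hS : {u | (boundaryGraph k H).Adj (⟨a' + 1, ha⟩, ⟨b' + 1, hb⟩) u} = ({(⟨a' + 1 + 1, haE⟩, ⟨b' + 1 + 1, hbk⟩), (⟨a', haW⟩, ⟨b' + 1 + 1, hbk⟩), (⟨a' + 1 + 1, haE⟩, ⟨b', hbS⟩), (⟨a', haW⟩, ⟨b', hbS⟩)} : Set (Fin k × Fin k)) := by
      ext u
      rw [Set.mem_setOf_eq, key u]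
      simp [hn, he, hs, hw]
    rw [hS, hquad]
    simp
  · have hS : {u | (boundaryGraph k H).Adj (⟨a' + 1, ha⟩, ⟨b' + 1, hb⟩) u} = ({(⟨a' + 1 + 1, haE⟩, ⟨b' + 1 + 1, hbk⟩), (⟨a' + 1 + 1, haE⟩, ⟨b', hbS⟩)} : Set (Fin k × Fin k)) := by
      ext u
      rw [Set.mem_setOf_eq, key u]
      simp [hn, he, hs, hw]
    rw [hS, Set.ncard_pair d13]
    simp
  · have hS : {u | (boundaryGraph k H).Adj (⟨a' + 1, ha⟩, ⟨b' + 1, hb⟩) u} = ({(⟨a', haW⟩, ⟨b' + 1 + 1, hbk⟩), (⟨a' + 1 + 1, haE⟩, ⟨b', hbS⟩)} : Set (Fin k × Fin k)) := by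
      ext u
      rw [Set.mem_setOf_eq, key u]
      simp [hn, he, hs, hw]
    rw [hS, Set.ncard_pair d23]
    simp
  · have hS : {u | (boundaryGraph k H).Adj (⟨a' + 1, ha⟩, ⟨b' + 1, hb⟩) u} = ({(⟨a' + 1 + 1, haE⟩, ⟨b', hbS⟩), (⟨a', haW⟩, ⟨b', hbS⟩)} : Set (Fin k × Fin k)) := by
      ext u
      rw [Set.mem_setOf_eq, key u]
      simp [hn, he, hs, hw]
    rw [hS, Set.ncard_pair d34]
    simp
  · have hS : {u | (boundaryGraph k H).Adj (⟨a' + 1, ha⟩, ⟨b' + 1, hb⟩) u} = ({(⟨a', haW⟩, ⟨b' + 1 + 1, hbk⟩), (⟨a', haW⟩, ⟨b', hbS⟩)} : Set (Fin k × Fin k)) := by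
      ext u
      rw [Set.mem_setOf_eq, key u]
      simp [hn, he, hs, hw]
    rw [hS, Set.ncard_pair d24]
    simp
  · have hS : {u | (boundaryGraph k H).Adj (⟨a' + 1, ha⟩, ⟨b' + 1, hb⟩) u} = (∅ : Set (Fin k × Fin k)) := by
      ext u
      rw [Set.mem_setOf_eq, key u]
      simp [hn, he, hs, hw]
    rw [hS, Set.ncard_empty]
    simp
end
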